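/- arXiv:1507.03266 — 7 statements merged into one kernel-verified Lean document; each statement's English description precedes it below -/
import Mathlib

section
/- Fix u ∈ ℝ^m, θ ∈ ℝ^p and ε ≥ 0, and suppose Assumption A1 holds for this (u,θ). Then the set C(u,θ,ε) = { (x,λ) ∈ ℝ^d × ℝ^q : λ ≥ 0, g(x,u,θ) ≤ ε componentwise, and f(x,u,θ) ≤ f(x',u,θ) + ⟨λ, g(x',u,θ)⟩ + ε for all x' ∈ ℝ^d } is a convex subset of ℝ^d × ℝ^q. Consequently, for fixed θ, the (regularized) duality-based problem — minimizing the convex objective (1/n) Σ_{i=1}^n ‖y_i − x_i‖² over ((x_1,λ_1),…,(x_n,λ_n)) with (x_i,λ_i) ∈ C(u_i,θ,ε) for each i — is a convex optimization problem (its feasible set is convex and its objective is convex). -/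
open Set Metric Filter MeasureTheory ProbabilityTheory

noncomputable section

/-- Euclidean space ℝ^k. -/
abbrev Euc (k : ℕ) := EuclideanSpace ℝ (Fin k)

/-- The duality-based constraint set `C(u,θ,ε)` of pairs `(x,λ)` with `λ ≥ 0`,
`g(x,u,θ) ≤ ε` componentwise, and `f(x,u,θ) − h(λ,u,θ) ≤ ε`. -/
def DualFeas {d m p q : ℕ} (f : Euc d → Euc m → Euc p → ℝ)
    (g : Euc d → Euc m → Euc p → Fin q → ℝ) (uu : Euc m) (θ : Euc p) (ε : ℝ) :
    Set (Euc d × (Fin q → ℝ)) :=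
  {xl | (∀ j, 0 ≤ xl.2 j) ∧ (∀ j, g xl.1 uu θ j ≤ ε) ∧
    ∀ x' : Euc d, f xl.1 uu θ ≤ f x' uu θ + ∑ j, xl.2 j * g x' uu θ j + ε}

lemma convexOn_finsetSum {ι E : Type*} [AddCommGroup E] [Module ℝ E]
    (s : Finset ι) (h : ι → E → ℝ) (hc : ∀ i ∈ s, ConvexOn ℝ Set.univ (h i)) :
    ConvexOn ℝ Set.univ (fun x => ∑ i ∈ s, h i x) := by
  classical
  induction s using Finset.induction with
  | empty => simpa using convexOn_const (0 : ℝ) convex_univ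
  | insert _ _ hi ih =>
    simp only [Finset.sum_insert hi]
    exact (hc _ (Finset.mem_insert_self _ _)).add
      (ih fun i his => hc i (Finset.mem_insert_of_mem his))

/-- Convexity of (R-)DB-RISK-SAA for fixed `θ` (Propositions 4 and 6): under A1,
the set `C(u,θ,ε)` is convex, and the regularized duality-based problem — minimizing
`(1/n) Σ_i ‖y_i − x_i‖²` subject to `(x_i,λ_i) ∈ C(u_i,θ,ε)` — is a convex
optimization problem: its feasible set is convex and its objective is convex on it. -/
theorem statement2 {d m p q : ℕ} (n : ℕ)
    (f : Euc d → Euc m → Euc p → ℝ) (g : Euc d → Euc m → Euc p → Fin q → ℝ)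
    (θ : Euc p) (ε : ℝ) (hε : 0 ≤ ε)
    -- A1: for each fixed (u, θ), continuity and convexity in x
    (hf_cont : ∀ uu : Euc m, Continuous fun x => f x uu θ)
    (hf_conv : ∀ uu : Euc m, ConvexOn ℝ Set.univ fun x => f x uu θ)
    (hg_cont : ∀ (uu : Euc m) (j : Fin q), Continuous fun x => g x uu θ j)
    (hg_conv : ∀ (uu : Euc m) (j : Fin q), ConvexOn ℝ Set.univ fun x => g x uu θ j)
    -- data
    (u : Fin n → Euc m) (y : Fin n → Euc d) :
    (∀ uu : Euc m, Convex ℝ (DualFeas f g uu θ ε)) ∧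
    Convex ℝ {X : Fin n → Euc d × (Fin q → ℝ) | ∀ i, X i ∈ DualFeas f g (u i) θ ε} ∧
    ConvexOn ℝ {X : Fin n → Euc d × (Fin q → ℝ) | ∀ i, X i ∈ DualFeas f g (u i) θ ε}
      (fun X => (1 / n : ℝ) * ∑ i, ‖y i - (X i).1‖ ^ 2) := by
  have hC : ∀ uu : Euc m, Convex ℝ (DualFeas f g uu θ ε) := by
    intro uu
    rintro ⟨x₁, l₁⟩ ⟨h₁pos, h₁g, h₁f⟩ ⟨x₂, l₂⟩ ⟨h₂pos, h₂g, h₂f⟩ s t hs ht hst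
    refine ⟨?_, ?_, ?_⟩
    · intro j
      have : (s • (x₁, l₁) + t • (x₂, l₂)).2 j = s * l₁ j + t * l₂ j := rfl
      rw [this]
      exact add_nonneg (mul_nonneg hs (h₁pos j)) (mul_nonneg ht (h₂pos j))
    · intro j
      have h := (hg_conv uu j).2 (Set.mem_univ x₁) (Set.mem_univ x₂) hs ht hst
      calc g (s • (x₁, l₁) + t • (x₂, l₂)).1 uu θ j
          = g (s • x₁ + t • x₂) uu θ j := rfl
        _ ≤ s * g x₁ uu θ j + t * g x₂ uu θ j := h
        _ ≤ s * ε + t * ε := add_le_add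
            (mul_le_mul_of_nonneg_left (h₁g j) hs)
            (mul_le_mul_of_nonneg_left (h₂g j) ht)
        _ = ε := by rw [← add_mul, hst, one_mul]
    · intro x'
      have h := (hf_conv uu).2 (Set.mem_univ x₁) (Set.mem_univ x₂) hs ht hst
      calc f (s • (x₁, l₁) + t • (x₂, l₂)).1 uu θ
          = f (s • x₁ + t • x₂) uu θ := rfl
        _ ≤ s * f x₁ uu θ + t * f x₂ uu θ := h
        _ ≤ s * (f x' uu θ + ∑ j, l₁ j * g x' uu θ j + ε)
            + t * (f x' uu θ + ∑ j, l₂ j * g x' uu θ j + ε) := add_le_add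
            (mul_le_mul_of_nonneg_left (h₁f x') hs)
            (mul_le_mul_of_nonneg_left (h₂f x') ht)
        _ = f x' uu θ + ∑ j, (s • (x₁, l₁) + t • (x₂, l₂)).2 j * g x' uu θ j + ε := by
            have : ∀ j, (s • (x₁, l₁) + t • (x₂, l₂)).2 j = s * l₁ j + t * l₂ j :=
              fun j => rfl
            simp only [this, add_mul, mul_assoc, Finset.sum_add_distrib,
              ← Finset.mul_sum]
            linear_combination (f x' uu θ + ε) * hst
  refine ⟨hC, ?_, ?_⟩
  · have : {X : Fin n → Euc d × (Fin q → ℝ) | ∀ i, X i ∈ DualFeas f g (u i) θ ε}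
        = Set.pi Set.univ (fun i => DualFeas f g (u i) θ ε) := by
      ext X; simp [Set.mem_pi]
    rw [this]
    exact convex_pi fun i _ => hC (u i)
  · have hobj : ConvexOn ℝ Set.univ
        (fun X : Fin n → Euc d × (Fin q → ℝ) => (1 / n : ℝ) * ∑ i, ‖y i - (X i).1‖ ^ 2) := by
      have hsum : ConvexOn ℝ Set.univ
          (fun X : Fin n → Euc d × (Fin q → ℝ) => ∑ i, ‖y i - (X i).1‖ ^ 2) := by
        refine convexOn_finsetSum _ _ (fun i _ => ?_)
        have hnorm : ConvexOn ℝ Set.univ (fun z : Euc d => ‖z‖ ^ 2) := by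
          refine ⟨convex_univ, fun z _ w _ a b ha hb hab => ?_⟩
          have h1 : ‖a • z + b • w‖ ≤ a * ‖z‖ + b * ‖w‖ := by
            refine (norm_add_le _ _).trans ?_
            rw [norm_smul, norm_smul, Real.norm_eq_abs, Real.norm_eq_abs,
              abs_of_nonneg ha, abs_of_nonneg hb]
          have h2 : 0 ≤ ‖a • z + b • w‖ := norm_nonneg _
          simp only [smul_eq_mul]
          nlinarith [mul_nonneg (mul_nonneg ha hb) (sq_nonneg (‖z‖ - ‖w‖)),
            norm_nonneg z, norm_nonneg w]
        let L : (Fin n → Euc d × (Fin q → ℝ)) →ₗ[ℝ] Euc d :=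
          (LinearMap.fst ℝ (Euc d) (Fin q → ℝ)).comp (LinearMap.proj i)
        let A : (Fin n → Euc d × (Fin q → ℝ)) →ᵃ[ℝ] Euc d :=
          AffineMap.const ℝ _ (y i) - L.toAffineMap
        have := hnorm.comp_affineMap A
        simpa [A, L, Set.preimage_univ, Function.comp_def] using this
      have := hsum.smul (c := (1 / n : ℝ)) (by positivity)
      simpa [smul_eq_mul] using this
    exact hobj.subset (Set.subset_univ _) (by
      have : {X : Fin n → Euc d × (Fin q → ℝ) | ∀ i, X i ∈ DualFeas f g (u i) θ ε}
          = Set.pi Set.univ (fun i => DualFeas f g (u i) θ ε) := by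
        ext X; simp [Set.mem_pi]
      rw [this]
      exact convex_pi fun i _ => hC (u i))
end
end

section
/- Suppose Assumptions A1, A2 and R1 hold, that f and g are jointly continuous in (x,u,θ), and that f(·,u,θ) is strictly convex on ℝ^d for each fixed (u,θ) ∈ 𝒰 × Θ. Fix data (u_i, y_i) ∈ ℝ^m × ℝ^d, i = 1,…,n, with each u_i ∈ 𝒰. Then for each (u,θ) ∈ 𝒰 × Θ the solution set S(u,θ) consists of a single point, and the function Q_n : Θ → ℝ defined by Q_n(θ) = inf{ (1/n) Σ_{i=1}^n ‖y_i − x_i‖² : x_i ∈ S(u_i,θ) for all i } is continuous on Θ. -/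
open Set Metric Filter MeasureTheory ProbabilityTheory Topology

noncomputable section

/-- Feasible set `Φ(u,θ)` of FOP. -/
def Feas {d m p q : ℕ} (g : Euc d → Euc m → Euc p → Fin q → ℝ)
    (u : Euc m) (θ : Euc p) : Set (Euc d) :=
  {x | ∀ j, g x u θ j ≤ 0}

/-- Solution set `S(u,θ)` of FOP. -/
def Sol {d m p q : ℕ} (f : Euc d → Euc m → Euc p → ℝ)
    (g : Euc d → Euc m → Euc p → Fin q → ℝ) (u : Euc m) (θ : Euc p) : Set (Euc d) :=
  {x ∈ Feas g u θ | ∀ x' ∈ Feas g u θ, f x u θ ≤ f x' u θ}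

/-- The sample-average risk `Q_n(θ)` of RISK-SAA. -/
def Qn {d m p q : ℕ} (f : Euc d → Euc m → Euc p → ℝ)
    (g : Euc d → Euc m → Euc p → Fin q → ℝ) (n : ℕ)
    (u : Fin n → Euc m) (y : Fin n → Euc d) (θ : Euc p) : ℝ :=
  sInf ((fun x : Fin n → Euc d => (1 / n : ℝ) * ∑ i, ‖y i - x i‖ ^ 2) ''
    {x | ∀ i, x i ∈ Sol f g (u i) θ})

lemma limit_mem_sol {d m p q : ℕ} {f : Euc d → Euc m → Euc p → ℝ}
    {g : Euc d → Euc m → Euc p → Fin q → ℝ}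
    (hf_cont : Continuous fun t : Euc d × Euc m × Euc p => f t.1 t.2.1 t.2.2)
    (hg_cont : ∀ j, Continuous fun t : Euc d × Euc m × Euc p => g t.1 t.2.1 t.2.2 j)
    (hg_conv : ∀ (uu : Euc m) (θθ : Euc p) (j : Fin q),
      ConvexOn ℝ Set.univ fun x => g x uu θθ j)
    (uu : Euc m) (θ : Euc p) (xb : Euc d) (hxb : ∀ j, g xb uu θ j < 0)
    (ηk : ℕ → Euc p) (hηto : Tendsto ηk atTop (𝓝 θ))
    (wk : ℕ → Euc d) (hwk : ∀ k, wk k ∈ Sol f g uu (ηk k))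
    (xa : Euc d) (hwto : Tendsto wk atTop (𝓝 xa)) :
    xa ∈ Sol f g uu θ := by
  have htrip : Tendsto (fun k => ((wk k, uu, ηk k) : Euc d × Euc m × Euc p)) atTop
      (𝓝 (xa, uu, θ)) := hwto.prodMk_nhds (tendsto_const_nhds.prodMk_nhds hηto)
  have hgf : ∀ j, Tendsto (fun k => g (wk k) uu (ηk k) j) atTop (𝓝 (g xa uu θ j)) :=
    fun j => ((hg_cont j).tendsto _).comp htrip
  have hfl : Tendsto (fun k => f (wk k) uu (ηk k)) atTop (𝓝 (f xa uu θ)) :=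
    (hf_cont.tendsto _).comp htrip
  refine ⟨fun j => le_of_tendsto (hgf j) (Eventually.of_forall fun k => (hwk k).1 j), ?_⟩
  intro x' hx'
  set z : ℕ → Euc d := fun s => (1 - (1:ℝ)/(s+1)) • x' + ((1:ℝ)/(s+1)) • xb with hzdef
  have h1 : Tendsto (fun s : ℕ => (1:ℝ)/(s+1)) atTop (𝓝 0) :=
    tendsto_one_div_add_atTop_nhds_zero_nat
  have hzto : Tendsto z atTop (𝓝 x') := by
    have h2 : Tendsto (fun s : ℕ => ((1:ℝ) - 1/(s+1)) • x' + ((1:ℝ)/(s+1)) • xb) atTop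
        (𝓝 (((1:ℝ) - 0) • x' + (0:ℝ) • xb)) :=
      ((tendsto_const_nhds.sub h1).smul_const x').add (h1.smul_const xb)
    rw [hzdef]
    simpa [one_div] using h2
  have hle : ∀ s, f xa uu θ ≤ f (z s) uu θ := by
    intro s
    set a : ℝ := (1:ℝ)/(s+1) with ha
    have ha0 : 0 < a := by positivity
    have ha1 : a ≤ 1 := by
      rw [ha, div_le_one (by positivity)]
      linarith [Nat.cast_nonneg (α := ℝ) s]
    have hzs : z s = (1 - a) • x' + a • xb := rfl
    have hzneg : ∀ j, g (z s) uu θ j < 0 := by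
      intro j
      have hc := (hg_conv uu θ j).2 (mem_univ x') (mem_univ xb)
        (by linarith : (0:ℝ) ≤ 1 - a) (le_of_lt ha0) (by ring)
      rw [← hzs] at hc
      have hA : (1 - a) * g x' uu θ j ≤ 0 :=
        mul_nonpos_iff.2 (Or.inl ⟨by linarith, hx' j⟩)
      have hB : a * g xb uu θ j < 0 := mul_neg_of_pos_of_neg ha0 (hxb j)
      have : g (z s) uu θ j ≤ (1 - a) * g x' uu θ j + a * g xb uu θ j := by
        simpa [smul_eq_mul] using hc
      linarith
    have hev : ∀ᶠ k in atTop, z s ∈ Feas g uu (ηk k) := by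
      rw [show (fun k => z s ∈ Feas g uu (ηk k)) = fun k => ∀ j, g (z s) uu (ηk k) j ≤ 0
        from rfl]
      rw [eventually_all]
      intro j
      have htz : Tendsto (fun k => g (z s) uu (ηk k) j) atTop (𝓝 (g (z s) uu θ j)) :=
        ((hg_cont j).tendsto _).comp
          (tendsto_const_nhds.prodMk_nhds (tendsto_const_nhds.prodMk_nhds hηto))
      filter_upwards [htz.eventually (gt_mem_nhds (hzneg j))] with k hk using le_of_lt hk
    have hev2 : ∀ᶠ k in atTop, f (wk k) uu (ηk k) ≤ f (z s) uu (ηk k) :=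
      hev.mono fun k hk => (hwk k).2 _ hk
    have hfz : Tendsto (fun k => f (z s) uu (ηk k)) atTop (𝓝 (f (z s) uu θ)) :=
      (hf_cont.tendsto _).comp
        (tendsto_const_nhds.prodMk_nhds (tendsto_const_nhds.prodMk_nhds hηto))
    exact le_of_tendsto_of_tendsto hfl hfz hev2
  have hfz' : Tendsto (fun s => f (z s) uu θ) atTop (𝓝 (f x' uu θ)) :=
    (hf_cont.tendsto _).comp
      (hzto.prodMk_nhds (tendsto_const_nhds.prodMk_nhds tendsto_const_nhds))
  exact ge_of_tendsto' hfz' hle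

lemma sol_unique {d m p q : ℕ} {f : Euc d → Euc m → Euc p → ℝ}
    {g : Euc d → Euc m → Euc p → Fin q → ℝ}
    (hf_cont : Continuous fun t : Euc d × Euc m × Euc p => f t.1 t.2.1 t.2.2)
    (hg_conv : ∀ (uu : Euc m) (θθ : Euc p) (j : Fin q),
      ConvexOn ℝ Set.univ fun x => g x uu θθ j)
    (uu : Euc m) (θ : Euc p)
    (hstrict : StrictConvexOn ℝ Set.univ fun x => f x uu θ)
    (hcpt : IsCompact (Feas g uu θ)) (xb : Euc d) (hxbm : xb ∈ Feas g uu θ) :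
    ∃! x : Euc d, x ∈ Sol f g uu θ := by
  have hfc : Continuous fun x : Euc d => f x uu θ := by
    have : Continuous fun x : Euc d => ((x, uu, θ) : Euc d × Euc m × Euc p) :=
      continuous_id.prodMk continuous_const
    exact hf_cont.comp this
  obtain ⟨x0, hx0, hmin⟩ := hcpt.exists_isMinOn ⟨xb, hxbm⟩ hfc.continuousOn
  have hminle : ∀ x' ∈ Feas g uu θ, f x0 uu θ ≤ f x' uu θ :=
    fun x' hx' => isMinOn_iff.1 hmin x' hx'
  refine ⟨x0, ⟨hx0, hminle⟩, ?_⟩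
  intro z hz
  by_contra hne
  have hcv : Convex ℝ (Feas g uu θ) := by
    intro x hx yv hy a b ha hb hab
    intro j
    have hc := (hg_conv uu θ j).2 (mem_univ x) (mem_univ yv) ha hb hab
    have h1 : a * g x uu θ j ≤ 0 := mul_nonpos_iff.2 (Or.inl ⟨ha, hx j⟩)
    have h2 : b * g yv uu θ j ≤ 0 := mul_nonpos_iff.2 (Or.inl ⟨hb, hy j⟩)
    have : g (a • x + b • yv) uu θ j ≤ a * g x uu θ j + b * g yv uu θ j := by
      simpa [smul_eq_mul] using hc
    linarith
  have hmid : (1/2 : ℝ) • z + (1/2 : ℝ) • x0 ∈ Feas g uu θ :=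
    hcv hz.1 hx0 (by norm_num) (by norm_num) (by norm_num)
  have heq : f z uu θ = f x0 uu θ :=
    le_antisymm (hz.2 x0 hx0) (hminle z hz.1)
  have hstr := hstrict.2 (mem_univ z) (mem_univ x0) hne
    (by norm_num : (0:ℝ) < 1/2) (by norm_num : (0:ℝ) < 1/2) (by norm_num)
  have hge := hz.2 _ hmid
  simp only [smul_eq_mul] at hstr
  rw [heq] at hge
  linarith

lemma tendsto_sol {d m p q : ℕ} {f : Euc d → Euc m → Euc p → ℝ}
    {g : Euc d → Euc m → Euc p → Fin q → ℝ}
    (hf_cont : Continuous fun t : Euc d × Euc m × Euc p => f t.1 t.2.1 t.2.2)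
    (hg_cont : ∀ j, Continuous fun t : Euc d × Euc m × Euc p => g t.1 t.2.1 t.2.2 j)
    (hg_conv : ∀ (uu : Euc m) (θθ : Euc p) (j : Fin q),
      ConvexOn ℝ Set.univ fun x => g x uu θθ j)
    (uu : Euc m) (θ : Euc p) (xb : Euc d) (hxb : ∀ j, g xb uu θ j < 0)
    (θk : ℕ → Euc p) (hθto : Tendsto θk atTop (𝓝 θ))
    (xk : ℕ → Euc d) (hxk : ∀ k, xk k ∈ Sol f g uu (θk k))
    (xs : Euc d) (huniq : ∀ z ∈ Sol f g uu θ, z = xs)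
    (M : ℝ) (hM : ∀ k, ‖xk k‖ ≤ M) :
    Tendsto xk atTop (𝓝 xs) := by
  apply tendsto_of_subseq_tendsto
  intro ns hns
  obtain ⟨a, -, ms, hms, hconv⟩ := (isCompact_closedBall (0 : Euc d) M).tendsto_subseq
    (x := fun k => xk (ns k)) (fun k => mem_closedBall_zero_iff.2 (hM (ns k)))
  refine ⟨ms, ?_⟩
  have haSol : a ∈ Sol f g uu θ :=
    limit_mem_sol hf_cont hg_cont hg_conv uu θ xb hxb
      (fun k => θk (ns (ms k))) (hθto.comp (hns.comp hms.tendsto_atTop))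
      (fun k => xk (ns (ms k))) (fun k => hxk _) a hconv
  exact (huniq a haSol) ▸ hconv
/-- Proposition 2 (strict convexity implies continuity of `Q_n`): under A1, A2, R1,
joint continuity of `f` and `g`, and strict convexity of `f(·,u,θ)` for `(u,θ) ∈ 𝒰 × Θ`,
the solution set `S(u,θ)` is a single point for each `(u,θ) ∈ 𝒰 × Θ` and the
sample-average risk `Q_n` is continuous on `Θ`. -/
theorem statement3 {d m p q : ℕ} (n : ℕ)
    (f : Euc d → Euc m → Euc p → ℝ) (g : Euc d → Euc m → Euc p → Fin q → ℝ)
    (𝒰 : Set (Euc m)) (Θ : Set (Euc p))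
    -- joint continuity of f and g
    (hf_cont : Continuous fun t : Euc d × Euc m × Euc p => f t.1 t.2.1 t.2.2)
    (hg_cont : ∀ j, Continuous fun t : Euc d × Euc m × Euc p => g t.1 t.2.1 t.2.2 j)
    -- A1: convexity in x for each fixed (u, θ)
    (hf_conv : ∀ (uu : Euc m) (θθ : Euc p), ConvexOn ℝ Set.univ fun x => f x uu θθ)
    (hg_conv : ∀ (uu : Euc m) (θθ : Euc p) (j : Fin q),
      ConvexOn ℝ Set.univ fun x => g x uu θθ j)
    -- strict convexity of f(·,u,θ) on 𝒰 × Θ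
    (hf_strict : ∀ uu ∈ 𝒰, ∀ θθ ∈ Θ, StrictConvexOn ℝ Set.univ fun x => f x uu θθ)
    -- A2
    (hΘ : Convex ℝ Θ)
    -- R1: nonempty compact feasible sets with Slater points, uniformly bounded
    (hR1 : ∀ uu ∈ 𝒰, ∀ θθ ∈ Θ, IsCompact (Feas g uu θθ) ∧
      ∃ xb ∈ Feas g uu θθ, ∀ j, g xb uu θθ j < 0)
    (hR1bd : ∃ M > 0, ∀ uu ∈ 𝒰, ∀ θθ ∈ Θ, ∀ x ∈ Feas g uu θθ, ‖x‖ ≤ M)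
    -- data
    (u : Fin n → Euc m) (y : Fin n → Euc d) (hu : ∀ i, u i ∈ 𝒰) :
    (∀ uu ∈ 𝒰, ∀ θθ ∈ Θ, ∃! x : Euc d, x ∈ Sol f g uu θθ) ∧
    ContinuousOn (Qn f g n u y) Θ := by
  classical
  obtain ⟨M, hMpos, hMbd⟩ := hR1bd
  have part1 : ∀ uu ∈ 𝒰, ∀ θθ ∈ Θ, ∃! x : Euc d, x ∈ Sol f g uu θθ := by
    intro uu huu θθ hθθ
    obtain ⟨hcpt, xb, hxbF, -⟩ := hR1 uu huu θθ hθθ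
    exact sol_unique hf_cont hg_conv uu θθ (hf_strict uu huu θθ hθθ) hcpt xb hxbF
  refine ⟨part1, ?_⟩
  have hxst : ∀ (i : Fin n), ∀ θθ ∈ Θ,
      ∃ x, x ∈ Sol f g (u i) θθ ∧ ∀ z ∈ Sol f g (u i) θθ, z = x := by
    intro i θθ hθθ
    obtain ⟨x, hx, hun⟩ := part1 (u i) (hu i) θθ hθθ
    exact ⟨x, hx, hun⟩
  set xst : Fin n → Euc p → Euc d := fun i θθ =>
    if h : θθ ∈ Θ then (hxst i θθ h).choose else 0 with hxstdef
  have hxstSol : ∀ (i : Fin n) (θθ : Euc p) (h : θθ ∈ Θ),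
      xst i θθ ∈ Sol f g (u i) θθ ∧ ∀ z ∈ Sol f g (u i) θθ, z = xst i θθ := by
    intro i θθ h
    simp only [hxstdef, dif_pos h]
    exact (hxst i θθ h).choose_spec
  have hQeq : ∀ θθ ∈ Θ, Qn f g n u y θθ = (1 / n : ℝ) * ∑ i, ‖y i - xst i θθ‖ ^ 2 := by
    intro θθ h
    have hset : {x : Fin n → Euc d | ∀ i, x i ∈ Sol f g (u i) θθ}
        = {fun i => xst i θθ} := by
      ext z
      simp only [mem_setOf_eq, mem_singleton_iff]
      constructor
      · intro hz; funext i; exact (hxstSol i θθ h).2 _ (hz i)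
      · intro hz i; rw [hz]; exact (hxstSol i θθ h).1
    rw [Qn, hset, Set.image_singleton, csInf_singleton]
  have hcontsel : ∀ i : Fin n, ContinuousOn (fun θθ => xst i θθ) Θ := by
    intro i θ₀ hθ₀
    apply Filter.tendsto_iff_seq_tendsto.mpr
    intro ρ hρ
    rw [tendsto_nhdsWithin_iff] at hρ
    obtain ⟨hρto, hρmem⟩ := hρ
    obtain ⟨N, hN⟩ := eventually_atTop.1 hρmem
    rw [show ((fun θθ => xst i θθ) ∘ ρ) = fun k => xst i (ρ k) from rfl,
      ← tendsto_add_atTop_iff_nat N]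
    obtain ⟨-, xb, hxbF, hxbneg⟩ := hR1 (u i) (hu i) θ₀ hθ₀
    have hmem : ∀ k : ℕ, ρ (k + N) ∈ Θ := fun k => hN (k + N) (by omega)
    exact tendsto_sol hf_cont hg_cont hg_conv (u i) θ₀ xb hxbneg
      (fun k => ρ (k + N)) (hρto.comp (tendsto_add_atTop_nat N))
      (fun k => xst i (ρ (k + N))) (fun k => (hxstSol i _ (hmem k)).1)
      (xst i θ₀) (fun z hz => (hxstSol i θ₀ hθ₀).2 z hz)
      M (fun k => hMbd (u i) (hu i) _ (hmem k) _ ((hxstSol i _ (hmem k)).1).1)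
  have hF : ContinuousOn (fun θθ => (1 / n : ℝ) * ∑ i, ‖y i - xst i θθ‖ ^ 2) Θ := by
    apply ContinuousOn.mul continuousOn_const
    apply continuousOn_finset_sum
    intro i _
    exact ((continuousOn_const.sub (hcontsel i)).norm.pow 2)
  exact hF.congr hQeq
end
end

section
/- Suppose Assumptions A1, A2 and R1 hold and that f and g are jointly continuous in (x,u,θ). Fix data (u_i, y_i) ∈ ℝ^m × ℝ^d, i = 1,…,n, with each u_i ∈ 𝒰. Then the regularized sample-average risk (θ,ε) ↦ Q_n(θ; ε) is jointly continuous on Θ × (0,∞). -/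
open Set Metric Filter MeasureTheory ProbabilityTheory

noncomputable section

/-- The regularized sample-average risk `Q_n(θ; ε)` of R-DB-RISK-SAA: the infimum of
`(1/n) Σ_i ‖y_i − x_i‖²` over all `x` such that for each `i` there is `λ_i ≥ 0` with
`g(x_i,u_i,θ) ≤ ε` componentwise and `f(x_i,u_i,θ) − h(λ_i,u_i,θ) ≤ ε`. -/
def QnR {d m p q : ℕ} (f : Euc d → Euc m → Euc p → ℝ)
    (g : Euc d → Euc m → Euc p → Fin q → ℝ) (n : ℕ)
    (u : Fin n → Euc m) (y : Fin n → Euc d) (θ : Euc p) (ε : ℝ) : ℝ :=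
  sInf ((fun x : Fin n → Euc d => (1 / n : ℝ) * ∑ i, ‖y i - x i‖ ^ 2) ''
    {x | ∀ i, (∀ j, g (x i) (u i) θ j ≤ ε) ∧
      ∃ lam : Fin q → ℝ, (∀ j, 0 ≤ lam j) ∧
        ∀ x' : Euc d, f (x i) (u i) θ ≤ f x' (u i) θ + ∑ j, lam j * g x' (u i) θ j + ε})


lemma helperB {a b k : ℝ} (h : ∀ s : ℝ, 0 < s → a + s * k < b) : a ≤ b := by
  by_contra h'
  push_neg at h'
  have hs : (0:ℝ) < (a - b) / (2 * (|k| + 1)) := by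
    apply div_pos (by linarith) (by positivity)
  have h2 := h _ hs
  have hk : -|k| ≤ k := neg_abs_le k
  have habs : (0:ℝ) ≤ |k| := abs_nonneg k
  have hmul : ((a - b) / (2 * (|k| + 1))) * (|k| + 1) = (a - b) / 2 := by
    field_simp
  nlinarith [mul_le_mul_of_nonneg_left hk hs.le]

lemma helperB' {k R : ℝ} (h : ∀ s : ℝ, 0 < s → s * k < R) : k ≤ 0 := by
  by_contra h'
  push_neg at h'
  have hs : (0:ℝ) < (max R 0 + 1) / k := by positivity
  have h2 := h _ hs
  rw [div_mul_cancel₀] at h2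
  · have := le_max_left R 0; linarith
  · exact ne_of_gt h'

lemma combo_lt {a b X X' Y Y' : ℝ} (ha : 0 ≤ a) (hb : 0 ≤ b) (hab : a + b = 1)
    (h1 : X < X') (h2 : Y < Y') : a * X + b * Y < a * X' + b * Y' := by
  rcases eq_or_lt_of_le ha with h | h
  · have hb1 : b = 1 := by linarith
    rw [← h, hb1]; simpa using h2
  · have h3 := mul_lt_mul_of_pos_left h1 h
    have h4 := mul_le_mul_of_nonneg_left h2.le hb
    linarith

lemma strong_duality {d q : ℕ} (F : Euc d → ℝ) (G : Fin q → Euc d → ℝ)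
    (hFc : ConvexOn ℝ Set.univ F) (hGc : ∀ j, ConvexOn ℝ Set.univ (G j))
    (v : ℝ) (hv : ∀ x, (∀ j, G j x ≤ 0) → v ≤ F x)
    (xb : Euc d) (hxb : ∀ j, G j xb < 0) :
    ∃ lam : Fin q → ℝ, (∀ j, 0 ≤ lam j) ∧ ∀ x, v ≤ F x + ∑ j, lam j * G j x := by
  classical
  set A : Set ((Fin q → ℝ) × ℝ) := {zr | ∃ x, (∀ j, G j x < zr.1 j) ∧ F x < zr.2} with hA
  have hAopen : IsOpen A := by
    have hrw : A = ⋃ x : Euc d,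
        ((⋂ j, {zr : (Fin q → ℝ) × ℝ | G j x < zr.1 j}) ∩ {zr | F x < zr.2}) := by
      ext zr
      simp only [hA, Set.mem_setOf_eq, Set.mem_iUnion, Set.mem_inter_iff, Set.mem_iInter]
    rw [hrw]
    refine isOpen_iUnion fun x => IsOpen.inter (isOpen_iInter_of_finite fun j => ?_) ?_
    · exact isOpen_lt continuous_const ((continuous_apply j).comp continuous_fst)
    · exact isOpen_lt continuous_const continuous_snd
  have hAconv : Convex ℝ A := by
    rintro zr1 ⟨x1, hg1, hf1⟩ zr2 ⟨x2, hg2, hf2⟩ a b ha hb hab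
    refine ⟨a • x1 + b • x2, fun j => ?_, ?_⟩
    · have h1 : G j (a • x1 + b • x2) ≤ a * G j x1 + b * G j x2 := by
        simpa using (hGc j).2 (Set.mem_univ x1) (Set.mem_univ x2) ha hb hab
      have h2 : a * G j x1 + b * G j x2 < a * zr1.1 j + b * zr2.1 j :=
        combo_lt ha hb hab (hg1 j) (hg2 j)
      show G j (a • x1 + b • x2) < (a • zr1 + b • zr2).1 j
      have h3 : (a • zr1 + b • zr2).1 j = a * zr1.1 j + b * zr2.1 j := rfl
      rw [h3]
      linarith
    · have h1 : F (a • x1 + b • x2) ≤ a * F x1 + b * F x2 := by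
        simpa using hFc.2 (Set.mem_univ x1) (Set.mem_univ x2) ha hb hab
      have h2 : a * F x1 + b * F x2 < a * zr1.2 + b * zr2.2 :=
        combo_lt ha hb hab hf1 hf2
      show F (a • x1 + b • x2) < (a • zr1 + b • zr2).2
      have h3 : (a • zr1 + b • zr2).2 = a * zr1.2 + b * zr2.2 := rfl
      rw [h3]
      linarith
  have hnot : ((0 : Fin q → ℝ), v) ∉ A := by
    rintro ⟨x, hg, hf⟩
    exact absurd (hv x fun j => (hg j).le) (not_le.2 hf)
  obtain ⟨ℓ, hℓ⟩ := geometric_hahn_banach_open_point hAconv hAopen hnot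
  set c : ℝ := ℓ (0, 1) with hc
  set μ : Fin q → ℝ := fun j => ℓ ((fun j' => if j = j' then 1 else 0), 0) with hμ
  have hdec : ∀ (z : Fin q → ℝ) (r : ℝ), ℓ (z, r) = (∑ j, z j * μ j) + r * c := by
    intro z r
    have h1 : ((z, r) : (Fin q → ℝ) × ℝ) = (z, 0) + (0, r) := by simp
    rw [h1, map_add]
    congr 1
    · have h2 := LinearMap.pi_apply_eq_sum_univ
        ((ℓ : ((Fin q → ℝ) × ℝ) →ₗ[ℝ] ℝ).comp (LinearMap.inl ℝ (Fin q → ℝ) ℝ)) z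
      simp only [LinearMap.comp_apply, LinearMap.inl_apply, ContinuousLinearMap.coe_coe,
        smul_eq_mul] at h2
      rw [h2]
    · have h2 : ((0 : Fin q → ℝ), r) = r • ((0 : Fin q → ℝ), 1) := by simp
      rw [h2, _root_.map_smul, smul_eq_mul, hc]
  have key : ∀ (z : Fin q → ℝ) (r : ℝ) (x : Euc d),
      (∀ j, G j x < z j) → F x < r → (∑ j, z j * μ j) + r * c < v * c := by
    intro z r x h1 h2
    have h3 := hℓ (z, r) ⟨x, h1, h2⟩
    rw [hdec z r, hdec 0 v] at h3
    simpa using h3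
  have hcle : c ≤ 0 := by
    refine helperB' (R := v * c - ((∑ j, (G j xb + 1) * μ j) + F xb * c)) fun s hs => ?_
    have hk := key (fun j => G j xb + 1) (F xb + s) xb (fun j => by simp) (by linarith)
    have e1 : (F xb + s) * c = F xb * c + s * c := by ring
    linarith
  have hμle : ∀ j, μ j ≤ 0 := by
    intro j
    refine helperB' (R := v * c - ((∑ j', (G j' xb + 1) * μ j') + (F xb + 1) * c)) fun s hs => ?_
    have hk := key (fun j' => G j' xb + 1 + (if j = j' then s else 0)) (F xb + 1) xb
      (fun j' => by by_cases h : j = j' <;> simp [h] <;> linarith) (by linarith)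
    have e1 : (∑ j', (G j' xb + 1 + (if j = j' then s else 0)) * μ j')
        = (∑ j', (G j' xb + 1) * μ j') + s * μ j := by
      have hterm : ∀ j', (G j' xb + 1 + (if j = j' then s else 0)) * μ j'
          = (G j' xb + 1) * μ j' + (if j = j' then s * μ j' else 0) := by
        intro j'; by_cases h : j = j' <;> simp [h] <;> ring
      rw [Finset.sum_congr rfl fun j' _ => hterm j', Finset.sum_add_distrib,
        Finset.sum_ite_eq]
      simp
    linarith
  have hineq : ∀ x, (∑ j, G j x * μ j) + F x * c ≤ v * c := by
    intro x
    refine helperB (k := (∑ j, μ j) + c) fun s hs => ?_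
    have hk := key (fun j => G j x + s) (F x + s) x (fun j => by simp [hs]) (by linarith)
    have e1 : ∑ j, (G j x + s) * μ j = (∑ j, G j x * μ j) + s * ∑ j, μ j := by
      rw [Finset.mul_sum, ← Finset.sum_add_distrib]
      exact Finset.sum_congr rfl fun j _ => by ring
    have e2 : (F x + s) * c = F x * c + s * c := by ring
    have e3 : s * ((∑ j, μ j) + c) = s * (∑ j, μ j) + s * c := by ring
    linarith
  have hclt : c < 0 := by
    rcases lt_or_eq_of_le hcle with h | h
    · exact h
    · exfalso
      have hsum := hineq xb
      rw [h] at hsum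
      simp only [mul_zero, add_zero] at hsum
      have hterm : ∀ j ∈ Finset.univ, (0:ℝ) ≤ G j xb * μ j := fun j _ =>
        mul_nonneg_iff.2 (Or.inr ⟨(hxb j).le, hμle j⟩)
      have hsum0 : (∑ j, G j xb * μ j) = 0 := by
        have hge : (0:ℝ) ≤ ∑ j, G j xb * μ j := Finset.sum_nonneg hterm
        linarith
      have hμ0 : ∀ j, μ j = 0 := by
        intro j
        have := (Finset.sum_eq_zero_iff_of_nonneg hterm).1 hsum0 j (Finset.mem_univ j)
        rcases mul_eq_zero.1 this with h' | h'
        · exact absurd h' (ne_of_lt (hxb j))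
        · exact h'
      have hk := key (fun j => G j xb + 1) (F xb + 1) xb (fun j => by simp) (by linarith)
      rw [h] at hk
      simp [hμ0] at hk
  refine ⟨fun j => μ j / c, fun j => ?_, fun x => ?_⟩
  · rw [div_nonneg_iff]
    right
    exact ⟨hμle j, hclt.le⟩
  · have h1 := hineq x
    have e : (F x + ∑ j, (μ j / c) * G j x) * c = F x * c + ∑ j, G j x * μ j := by
      rw [add_mul, Finset.sum_mul]
      congr 1
      refine Finset.sum_congr rfl fun j _ => ?_
      have hc0 : c ≠ 0 := ne_of_lt hclt
      field_simp
    nlinarith [h1, e, hclt]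


lemma sInf_prod_sum {d : ℕ} (n : ℕ) (y : Fin n → Euc d) (S : Fin n → Set (Euc d))
    (hS : ∀ i, (S i).Nonempty) :
    sInf ((fun x : Fin n → Euc d => (1 / n : ℝ) * ∑ i, ‖y i - x i‖ ^ 2) ''
        {x | ∀ i, x i ∈ S i})
      = (1 / n : ℝ) * ∑ i, sInf ((fun x => ‖y i - x‖ ^ 2) '' S i) := by
  set D : Fin n → ℝ := fun i => sInf ((fun x => ‖y i - x‖ ^ 2) '' S i) with hD
  have hbd : ∀ i, BddBelow ((fun x => ‖y i - x‖ ^ 2) '' S i) := by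
    intro i
    refine ⟨0, ?_⟩
    rintro b ⟨x, _, rfl⟩
    positivity
  have hne : ∀ i, ((fun x => ‖y i - x‖ ^ 2) '' S i).Nonempty := fun i => (hS i).image _
  have hDle : ∀ i, ∀ x ∈ S i, D i ≤ ‖y i - x‖ ^ 2 := fun i x hx =>
    csInf_le (hbd i) ⟨x, hx, rfl⟩
  have hprodne : {x : Fin n → Euc d | ∀ i, x i ∈ S i}.Nonempty :=
    ⟨fun i => (hS i).choose, fun i => (hS i).choose_spec⟩
  have hbigbd : BddBelow ((fun x : Fin n → Euc d => (1 / n : ℝ) * ∑ i, ‖y i - x i‖ ^ 2) ''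
      {x | ∀ i, x i ∈ S i}) := by
    refine ⟨0, ?_⟩
    rintro b ⟨x, _, rfl⟩
    positivity
  apply le_antisymm
  · apply le_of_forall_pos_le_add
    intro δ hδ
    have hex : ∀ i, ∃ x ∈ S i, ‖y i - x‖ ^ 2 < D i + δ := by
      intro i
      obtain ⟨b, ⟨x, hx, rfl⟩, hb⟩ := exists_lt_of_csInf_lt (hne i) (lt_add_of_pos_right _ hδ)
      exact ⟨x, hx, hb⟩
    choose xi hximem hxilt using hex
    have h1 : sInf ((fun x : Fin n → Euc d => (1 / n : ℝ) * ∑ i, ‖y i - x i‖ ^ 2) ''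
        {x | ∀ i, x i ∈ S i}) ≤ (1 / n : ℝ) * ∑ i, ‖y i - xi i‖ ^ 2 :=
      csInf_le hbigbd ⟨xi, fun i => hximem i, rfl⟩
    have h2 : (1 / n : ℝ) * ∑ i, ‖y i - xi i‖ ^ 2 ≤ (1 / n : ℝ) * ∑ i, (D i + δ) := by
      apply mul_le_mul_of_nonneg_left (Finset.sum_le_sum fun i _ => (hxilt i).le)
      positivity
    have h3 : (1 / n : ℝ) * ∑ i, (D i + δ) ≤ (1 / n : ℝ) * ∑ i, D i + δ := by
      rw [Finset.sum_add_distrib, mul_add, Finset.sum_const, Finset.card_univ,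
        Fintype.card_fin, nsmul_eq_mul]
      have : (1 / n : ℝ) * (n * δ) ≤ δ := by
        rcases Nat.eq_zero_or_pos n with h | h
        · simp [h]; positivity
        · have : (n : ℝ) ≠ 0 := Nat.cast_ne_zero.2 h.ne'
          rw [one_div, inv_mul_cancel_left₀ this]
      linarith
    linarith
  · apply le_csInf (hprodne.image _)
    rintro b ⟨x, hx, rfl⟩
    apply mul_le_mul_of_nonneg_left (Finset.sum_le_sum fun i _ => hDle i (x i) (hx i))
    positivity


set_option maxHeartbeats 2000000 in
lemma Dcont {d p q : ℕ}
    (F : Euc d → Euc p → ℝ) (G : Fin q → Euc d → Euc p → ℝ)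
    (Θ : Set (Euc p)) (y : Euc d)
    (hFcont : Continuous fun t : Euc d × Euc p => F t.1 t.2)
    (hGcont : ∀ j, Continuous fun t : Euc d × Euc p => G j t.1 t.2)
    (hFconv : ∀ θ, ConvexOn ℝ Set.univ fun x => F x θ)
    (hGconv : ∀ θ j, ConvexOn ℝ Set.univ fun x => G j x θ)
    (M : ℝ) (hM0 : 0 < M)
    (hMbd : ∀ θ ∈ Θ, ∀ x : Euc d, (∀ j, G j x θ ≤ 0) → ‖x‖ ≤ M)
    (v : Euc p → ℝ) (xs : Euc p → Euc d)
    (hfeas : ∀ θ ∈ Θ, ∀ j, G j (xs θ) θ ≤ 0)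
    (hvdef : ∀ θ ∈ Θ, v θ = F (xs θ) θ)
    (hvmin : ∀ θ ∈ Θ, ∀ x : Euc d, (∀ j, G j x θ ≤ 0) → v θ ≤ F x θ)
    (hslater : ∀ θ ∈ Θ, ∃ xb : Euc d, ∀ j, G j xb θ < 0) :
    ContinuousOn (fun t : Euc p × ℝ =>
      sInf ((fun x => ‖y - x‖ ^ 2) ''
        {x : Euc d | (∀ j, G j x t.1 ≤ t.2) ∧ F x t.1 ≤ v t.1 + t.2})) (Θ ×ˢ Set.Ioi 0) := by
  have hbdd : ∀ (θ : Euc p) (e : ℝ), BddBelow ((fun x => ‖y - x‖ ^ 2) ''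
      {x : Euc d | (∀ j, G j x θ ≤ e) ∧ F x θ ≤ v θ + e}) := by
    intro θ e
    refine ⟨0, ?_⟩
    rintro b ⟨x, _, rfl⟩
    positivity
  have hTne : ∀ θ ∈ Θ, ∀ e : ℝ, 0 ≤ e →
      {x : Euc d | (∀ j, G j x θ ≤ e) ∧ F x θ ≤ v θ + e}.Nonempty := by
    intro θ hθ e he
    refine ⟨xs θ, fun j => le_trans (hfeas θ hθ j) he, ?_⟩
    rw [← hvdef θ hθ]
    linarith
  intro t₀ ht₀
  have hθ₀ : t₀.1 ∈ Θ := ht₀.1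
  have hε₀ : (0:ℝ) < t₀.2 := ht₀.2
  rw [Metric.continuousWithinAt_iff]
  intro δ hδ
  obtain ⟨xb, hxb⟩ := hslater t₀.1 hθ₀
  -- Slater margin
  have hρex : ∃ ρ > (0:ℝ), ∀ j, G j xb t₀.1 ≤ -ρ := by
    rcases isEmpty_or_nonempty (Fin q) with h | h
    · exact ⟨1, one_pos, fun j => (h.false j).elim⟩
    · refine ⟨-(Finset.univ.sup' Finset.univ_nonempty fun j => G j xb t₀.1), ?_, fun j => ?_⟩
      · have : (Finset.univ.sup' Finset.univ_nonempty fun j => G j xb t₀.1) < 0 :=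
          (Finset.sup'_lt_iff _).2 fun j _ => hxb j
        linarith
      · have := Finset.le_sup' (fun j => G j xb t₀.1) (Finset.mem_univ j)
        linarith
  obtain ⟨ρ, hρ0, hρle⟩ := hρex
  set B : ℝ := max ((M + ‖xb‖) * ((2 * (t₀.2 + 1) + ρ) / ρ)) (M + ‖xb‖ + 1) with hBdef
  clear_value B
  have hB0 : (0:ℝ) < B := by
    rw [hBdef]; exact lt_of_lt_of_le (by positivity) (le_max_right _ _)
  have hMB : M ≤ B := by
    rw [hBdef]; exact le_trans (by linarith [norm_nonneg xb]) (le_max_right _ _)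
  have hxbB : ‖xb‖ ≤ B := by
    rw [hBdef]; exact le_trans (by linarith) (le_max_right _ _)
  have hBmax : (M + ‖xb‖) * ((2 * (t₀.2 + 1) + ρ) / ρ) ≤ B := by
    rw [hBdef]; exact le_max_left _ _
  set K : Set (Euc d) := Metric.closedBall 0 B with hKdef
  have hKc : IsCompact K := isCompact_closedBall 0 B
  have hmemK : ∀ z : Euc d, ‖z‖ ≤ B → z ∈ K := by
    intro z hz
    rw [hKdef, Metric.mem_closedBall, dist_zero_right]
    exact hz
  obtain ⟨C, hC⟩ := hKc.exists_bound_of_continuousOn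
    ((hFcont.comp (continuous_id.prodMk continuous_const)).continuousOn :
      ContinuousOn (fun x : Euc d => F x t₀.1) K)
  have hC' : ∀ x ∈ K, |F x t₀.1| ≤ C := by
    intro x hx
    have := hC x hx
    rwa [Real.norm_eq_abs] at this
  have hC0 : (0:ℝ) ≤ C := le_trans (abs_nonneg _) (hC' 0 (hmemK 0 (by simp [hB0.le])))
  set c₁ : ℝ := 2 * C / ρ + 1 with hc₁def
  clear_value c₁
  have hc₁1 : (1:ℝ) ≤ c₁ := by
    rw [hc₁def]
    have : (0:ℝ) ≤ 2 * C / ρ := by positivity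
    linarith
  set c₂ : ℝ := 4 * B * (c₁ + 2) / t₀.2 with hc₂def
  clear_value c₂
  have hc₂0 : (0:ℝ) < c₂ := by
    rw [hc₂def]; exact div_pos (by nlinarith) hε₀
  set c₃ : ℝ := c₂ * (2 * (‖y‖ + B) + c₂) with hc₃def
  clear_value c₃
  have hc₃0 : (0:ℝ) < c₃ := by
    rw [hc₃def]
    have h1 : (0:ℝ) ≤ ‖y‖ := norm_nonneg _
    nlinarith
  set η : ℝ := min (min 1 (ρ / 2)) (min (t₀.2 / 2) (δ / (4 * c₃))) with hηdef
  clear_value η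
  have hη0 : (0:ℝ) < η := by
    rw [hηdef]
    apply lt_min (lt_min one_pos (by linarith)) (lt_min (by linarith) (by positivity))
  have hη1 : η ≤ 1 := by
    rw [hηdef]; exact le_trans (min_le_left _ _) (min_le_left _ _)
  have hηρ : η ≤ ρ / 2 := by
    rw [hηdef]; exact le_trans (min_le_left _ _) (min_le_right _ _)
  have hηε : η ≤ t₀.2 / 2 := by
    rw [hηdef]; exact le_trans (min_le_right _ _) (min_le_left _ _)
  have hηδ : c₃ * η ≤ δ / 4 := by
    have h1 : η ≤ δ / (4 * c₃) := by
      rw [hηdef]; exact le_trans (min_le_right _ _) (min_le_right _ _)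
    have h2 := mul_le_mul_of_nonneg_left h1 hc₃0.le
    have h3 : c₃ * (δ / (4 * c₃)) = δ / 4 := by
      field_simp
    linarith
  -- uniform continuity in θ over the ball K
  have hunif : ∃ r > (0:ℝ), ∀ θ : Euc p, dist θ t₀.1 < r → ∀ x ∈ K,
      |F x θ - F x t₀.1| ≤ η ∧ ∀ j, |G j x θ - G j x t₀.1| ≤ η := by
    set H : Euc d × Euc p → ℝ × (Fin q → ℝ) :=
      fun t => (F t.1 t.2, fun j => G j t.1 t.2) with hHdef
    have hHcont : Continuous H := hFcont.prodMk (continuous_pi fun j => hGcont j)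
    have hcomp : IsCompact (K ×ˢ Metric.closedBall t₀.1 1) :=
      hKc.prod (isCompact_closedBall _ _)
    have hUC := hcomp.uniformContinuousOn_of_continuous hHcont.continuousOn
    rw [Metric.uniformContinuousOn_iff] at hUC
    obtain ⟨r', hr'0, hr'⟩ := hUC η hη0
    refine ⟨min r' 1, by positivity, fun θ hθ x hx => ?_⟩
    have hmem1 : ((x, θ) : Euc d × Euc p) ∈ K ×ˢ Metric.closedBall t₀.1 1 :=
      ⟨hx, by
        rw [Metric.mem_closedBall]
        exact le_of_lt (lt_of_lt_of_le hθ (min_le_right _ _))⟩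
    have hmem2 : ((x, t₀.1) : Euc d × Euc p) ∈ K ×ˢ Metric.closedBall t₀.1 1 :=
      ⟨hx, by simp⟩
    have hdlt : dist ((x, θ) : Euc d × Euc p) (x, t₀.1) < r' := by
      rw [Prod.dist_eq]
      simp only [dist_self]
      rw [max_eq_right dist_nonneg]
      exact lt_of_lt_of_le hθ (min_le_left _ _)
    have hd := hr' _ hmem1 _ hmem2 hdlt
    rw [Prod.dist_eq] at hd
    have hdF : dist (F x θ) (F x t₀.1) ≤ η :=
      le_of_lt (lt_of_le_of_lt (le_max_left _ _) hd)
    have hdG : ∀ j, dist (G j x θ) (G j x t₀.1) ≤ η := by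
      intro j
      have hp := dist_le_pi_dist (H (x, θ)).2 (H (x, t₀.1)).2 j
      exact le_of_lt (lt_of_le_of_lt (le_trans hp (le_max_right _ _)) hd)
    exact ⟨by rwa [Real.dist_eq] at hdF, fun j => by rw [← Real.dist_eq]; exact hdG j⟩
  obtain ⟨r, hr0, hr⟩ := hunif
  -- Slater transfer
  have hxbθ : ∀ θ : Euc p, dist θ t₀.1 < r → ∀ j, G j xb θ ≤ -(ρ/2) := by
    intro θ hθ j
    have h1 := abs_le.1 ((hr θ hθ xb (hmemK xb hxbB)).2 j)
    have h2 := hρle j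
    linarith [h1.2]
  -- uniform bound on relaxed feasible sets
  have hub : ∀ θ ∈ Θ, dist θ t₀.1 < r → ∀ e : ℝ, 0 ≤ e → e ≤ t₀.2 + 1 →
      ∀ x : Euc d, (∀ j, G j x θ ≤ e) → ‖x‖ ≤ B := by
    intro θ hθΘ hθr e he0 he1 x hx
    set t : ℝ := 2 * e / (2 * e + ρ) with htdef
    clear_value t
    have hden : (0:ℝ) < 2 * e + ρ := by linarith
    have ht0 : (0:ℝ) ≤ t := by rw [htdef]; positivity
    have ht1 : t < 1 := by rw [htdef, div_lt_one hden]; linarith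
    have hsum : (1 - t) + t = 1 := by ring
    have hfeast : ∀ j, G j ((1 - t) • x + t • xb) θ ≤ 0 := by
      intro j
      have hcv : G j ((1 - t) • x + t • xb) θ ≤ (1 - t) * G j x θ + t * G j xb θ := by
        simpa using (hGconv θ j).2 (Set.mem_univ x) (Set.mem_univ xb) (by linarith) ht0 hsum
      have h1 : (1 - t) * G j x θ ≤ (1 - t) * e :=
        mul_le_mul_of_nonneg_left (hx j) (by linarith)
      have h2 : t * G j xb θ ≤ t * (-(ρ/2)) :=
        mul_le_mul_of_nonneg_left (hxbθ θ hθr j) ht0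
      have h3 : (1 - t) * e + t * (-(ρ/2)) = 0 := by
        rw [htdef]
        field_simp
        ring
      linarith
    have hxtM : ‖(1 - t) • x + t • xb‖ ≤ M := hMbd θ hθΘ _ hfeast
    have h5 : (1 - t) * ‖x‖ ≤ M + ‖xb‖ := by
      have h6 : ‖(1 - t) • x‖ ≤ ‖(1 - t) • x + t • xb‖ + ‖t • xb‖ := by
        have h := norm_add_le ((1 - t) • x + t • xb) (-(t • xb))
        simpa using h
      rw [norm_smul, norm_smul, Real.norm_eq_abs, Real.norm_eq_abs,
        abs_of_nonneg (by linarith : (0:ℝ) ≤ 1 - t), abs_of_nonneg ht0] at h6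
      have h7 : t * ‖xb‖ ≤ ‖xb‖ := by
        nlinarith [norm_nonneg xb]
      linarith
    have h1t : 1 - t = ρ / (2 * e + ρ) := by
      rw [htdef]
      field_simp
      ring
    rw [h1t, div_mul_eq_mul_div, div_le_iff₀ hden] at h5
    -- ρ * ‖x‖ ≤ (M + ‖xb‖) * (2e + ρ) ; conclude ‖x‖ ≤ B
    have h8 : ‖x‖ * ρ ≤ (M + ‖xb‖) * (2 * (t₀.2 + 1) + ρ) := by
      have h9 : (M + ‖xb‖) * (2 * e + ρ) ≤ (M + ‖xb‖) * (2 * (t₀.2 + 1) + ρ) := by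
        apply mul_le_mul_of_nonneg_left (by linarith) (by positivity)
      calc ‖x‖ * ρ = ρ * ‖x‖ := by ring
        _ ≤ (M + ‖xb‖) * (2 * e + ρ) := by linarith
        _ ≤ _ := h9
    have h10 : ‖x‖ ≤ (M + ‖xb‖) * ((2 * (t₀.2 + 1) + ρ) / ρ) := by
      rw [mul_div_assoc'] at *
      rw [le_div_iff₀ hρ0]
      exact h8
    linarith
  -- closeness of the value function
  have hvC : |v t₀.1| ≤ C := by
    rw [hvdef t₀.1 hθ₀]
    exact hC' (xs t₀.1) (hmemK _ (le_trans (hMbd t₀.1 hθ₀ _ (hfeas t₀.1 hθ₀)) hMB))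
  have hxbC : |F xb t₀.1| ≤ C := hC' xb (hmemK xb hxbB)
  have hvclose : ∀ θ ∈ Θ, dist θ t₀.1 < r → |v θ - v t₀.1| ≤ c₁ * η := by
    intro θ hθΘ hθr
    set t : ℝ := η / ρ with htdef
    clear_value t
    have ht0 : (0:ℝ) ≤ t := by rw [htdef]; positivity
    have ht1 : t ≤ 1 := by
      rw [htdef, div_le_one hρ0]
      linarith
    have hsum : (1 - t) + t = 1 := by ring
    have htρ : t * ρ = η := by
      rw [htdef]
      field_simp
    have ht2C : t * (2 * C) = 2 * C / ρ * η := by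
      rw [htdef]
      ring
    have hxs₀K : xs t₀.1 ∈ K := hmemK _ (le_trans (hMbd t₀.1 hθ₀ _ (hfeas t₀.1 hθ₀)) hMB)
    have hxsθM : ‖xs θ‖ ≤ M := hMbd θ hθΘ _ (hfeas θ hθΘ)
    have hxsθK : xs θ ∈ K := hmemK _ (le_trans hxsθM hMB)
    have hxbK : xb ∈ K := hmemK xb hxbB
    have hKconv : Convex ℝ K := convex_closedBall 0 B
    -- part 1 : v θ ≤ v t₀.1 + c₁ * η
    have hpart1 : v θ ≤ v t₀.1 + c₁ * η := by
      have hxtK : (1 - t) • xs t₀.1 + t • xb ∈ K := hKconv hxs₀K hxbK (by linarith) ht0 hsum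
      have hG₀ : ∀ j, G j ((1 - t) • xs t₀.1 + t • xb) t₀.1 ≤ -η := by
        intro j
        have hcv : G j ((1 - t) • xs t₀.1 + t • xb) t₀.1
            ≤ (1 - t) * G j (xs t₀.1) t₀.1 + t * G j xb t₀.1 := by
          simpa using (hGconv t₀.1 j).2 (Set.mem_univ _) (Set.mem_univ _) (by linarith) ht0 hsum
        have h1 : (1 - t) * G j (xs t₀.1) t₀.1 ≤ 0 :=
          mul_nonpos_iff.2 (Or.inl ⟨by linarith, hfeas t₀.1 hθ₀ j⟩)
        have h2 : t * G j xb t₀.1 ≤ t * (-ρ) := mul_le_mul_of_nonneg_left (hρle j) ht0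
        have h3 : t * (-ρ) = -η := by rw [← htρ]; ring
        linarith
      have hGθ : ∀ j, G j ((1 - t) • xs t₀.1 + t • xb) θ ≤ 0 := by
        intro j
        have := abs_le.1 ((hr θ hθr _ hxtK).2 j)
        linarith [(hG₀ j)]
      have h4 : v θ ≤ F ((1 - t) • xs t₀.1 + t • xb) θ := hvmin θ hθΘ _ hGθ
      have h5 := abs_le.1 (hr θ hθr _ hxtK).1
      have hcv : F ((1 - t) • xs t₀.1 + t • xb) t₀.1
          ≤ (1 - t) * F (xs t₀.1) t₀.1 + t * F xb t₀.1 := by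
        simpa using (hFconv t₀.1).2 (Set.mem_univ _) (Set.mem_univ _) (by linarith) ht0 hsum
      have h6 : (1 - t) * F (xs t₀.1) t₀.1 + t * F xb t₀.1
          = v t₀.1 + t * (F xb t₀.1 - v t₀.1) := by
        rw [← hvdef t₀.1 hθ₀]; ring
      have h7 : t * (F xb t₀.1 - v t₀.1) ≤ t * (2 * C) := by
        apply mul_le_mul_of_nonneg_left _ ht0
        have := abs_le.1 hvC
        have := abs_le.1 hxbC
        linarith [(abs_le.1 hvC).1, (abs_le.1 hxbC).2]
      have hc₁η : c₁ * η = 2 * C / ρ * η + η := by rw [hc₁def]; ring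
      have hA : F ((1 - t) • xs t₀.1 + t • xb) θ
          ≤ F ((1 - t) • xs t₀.1 + t • xb) t₀.1 + η := by linarith [h5.2]
      have htest : F ((1 - t) • xs t₀.1 + t • xb) t₀.1 ≤ v t₀.1 + t * (2 * C) := by
        linarith [hcv, h6, h7]
      have htest2 : v θ ≤ v t₀.1 + t * (2 * C) + η := by linarith [h4, hA, htest]
      linarith [htest2, ht2C, hc₁η]
    -- part 2 : v t₀.1 ≤ v θ + c₁ * η
    have hpart2 : v t₀.1 ≤ v θ + c₁ * η := by
      have hztK : (1 - t) • xs θ + t • xb ∈ K := hKconv hxsθK hxbK (by linarith) ht0 hsum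
      have hGx'₀ : ∀ j, G j (xs θ) t₀.1 ≤ η := by
        intro j
        have := abs_le.1 ((hr θ hθr _ hxsθK).2 j)
        linarith [hfeas θ hθΘ j]
      have hG : ∀ j, G j ((1 - t) • xs θ + t • xb) t₀.1 ≤ 0 := by
        intro j
        have hcv : G j ((1 - t) • xs θ + t • xb) t₀.1
            ≤ (1 - t) * G j (xs θ) t₀.1 + t * G j xb t₀.1 := by
          simpa using (hGconv t₀.1 j).2 (Set.mem_univ _) (Set.mem_univ _) (by linarith) ht0 hsum
        have h1 : (1 - t) * G j (xs θ) t₀.1 ≤ (1 - t) * η :=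
          mul_le_mul_of_nonneg_left (hGx'₀ j) (by linarith)
        have h2 : t * G j xb t₀.1 ≤ t * (-ρ) := mul_le_mul_of_nonneg_left (hρle j) ht0
        have h3 : (1 - t) * η + t * (-ρ) = - (t * η) := by
          rw [← htρ]; ring
        nlinarith
      have h4 : v t₀.1 ≤ F ((1 - t) • xs θ + t • xb) t₀.1 := hvmin t₀.1 hθ₀ _ hG
      have hcv : F ((1 - t) • xs θ + t • xb) t₀.1
          ≤ (1 - t) * F (xs θ) t₀.1 + t * F xb t₀.1 := by
        simpa using (hFconv t₀.1).2 (Set.mem_univ _) (Set.mem_univ _) (by linarith) ht0 hsum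
      have hx'C : |F (xs θ) t₀.1| ≤ C := hC' _ hxsθK
      have h5 : (1 - t) * F (xs θ) t₀.1 + t * F xb t₀.1
          = F (xs θ) t₀.1 + t * (F xb t₀.1 - F (xs θ) t₀.1) := by ring
      have h6 : t * (F xb t₀.1 - F (xs θ) t₀.1) ≤ t * (2 * C) := by
        apply mul_le_mul_of_nonneg_left _ ht0
        linarith [(abs_le.1 hx'C).1, (abs_le.1 hxbC).2]
      have h7 := abs_le.1 (hr θ hθr _ hxsθK).1
      have h8 : F (xs θ) θ = v θ := (hvdef θ hθΘ).symm
      have hc₁η : c₁ * η = 2 * C / ρ * η + η := by rw [hc₁def]; ring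
      linarith [h7.1, h7.2]
    rw [abs_le]
    constructor <;> [linarith; linarith]
  -- pull-in lemma
  have hpull : ∀ θ ∈ Θ, ∀ e : ℝ, 0 < e → ∀ a : ℝ, 0 ≤ a → ∀ x : Euc d, ‖x‖ ≤ B →
      (∀ j, G j x θ ≤ e + a) → F x θ ≤ v θ + e + a →
      ∃ x' : Euc d, ((∀ j, G j x' θ ≤ e) ∧ F x' θ ≤ v θ + e) ∧ ‖x' - x‖ ≤ 2 * B * a / e := by
    intro θ hθΘ e he a ha x hxB hgx hfx
    set t : ℝ := a / (e + a) with htdef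
    clear_value t
    have hden : (0:ℝ) < e + a := by linarith
    have ht0 : (0:ℝ) ≤ t := by rw [htdef]; positivity
    have ht1 : t ≤ 1 := by
      rw [htdef, div_le_one hden]; linarith
    have hsum : (1 - t) + t = 1 := by ring
    have hkey : (1 - t) * (e + a) = e := by
      rw [htdef]
      field_simp
      ring
    refine ⟨(1 - t) • x + t • xs θ, ⟨fun j => ?_, ?_⟩, ?_⟩
    · have hcv : G j ((1 - t) • x + t • xs θ) θ ≤ (1 - t) * G j x θ + t * G j (xs θ) θ := by
        simpa using (hGconv θ j).2 (Set.mem_univ _) (Set.mem_univ _) (by linarith) ht0 hsum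
      have h1 : (1 - t) * G j x θ ≤ (1 - t) * (e + a) :=
        mul_le_mul_of_nonneg_left (hgx j) (by linarith)
      have h2 : t * G j (xs θ) θ ≤ 0 :=
        mul_nonpos_iff.2 (Or.inl ⟨ht0, hfeas θ hθΘ j⟩)
      linarith
    · have hcv : F ((1 - t) • x + t • xs θ) θ ≤ (1 - t) * F x θ + t * F (xs θ) θ := by
        simpa using (hFconv θ).2 (Set.mem_univ _) (Set.mem_univ _) (by linarith) ht0 hsum
      have h1 : (1 - t) * F x θ ≤ (1 - t) * (v θ + e + a) :=
        mul_le_mul_of_nonneg_left hfx (by linarith)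
      have h2 : F (xs θ) θ = v θ := (hvdef θ hθΘ).symm
      have h3 : (1 - t) * (v θ + e + a) + t * v θ = v θ + e := by
        have : (1 - t) * (v θ + e + a) + t * v θ = v θ + (1 - t) * (e + a) := by ring
        rw [this, hkey]
      nlinarith [hcv, h1, h2, h3]
    · have hdiff : ((1 - t) • x + t • xs θ) - x = t • (xs θ - x) := by
        rw [sub_smul, one_smul, smul_sub]
        abel
      rw [hdiff, norm_smul, Real.norm_eq_abs, abs_of_nonneg ht0]
      have h1 : ‖xs θ - x‖ ≤ M + B := by
        calc ‖xs θ - x‖ ≤ ‖xs θ‖ + ‖x‖ := norm_sub_le _ _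
          _ ≤ M + B := by
              have := hMbd θ hθΘ _ (hfeas θ hθΘ)
              linarith
      have h2 : t ≤ a / e := by
        rw [htdef]
        apply div_le_div_of_nonneg_left ha he (by linarith)
      calc t * ‖xs θ - x‖ ≤ (a / e) * (M + B) :=
            mul_le_mul h2 h1 (norm_nonneg _) (by positivity)
        _ ≤ (a / e) * (2 * B) := by
            apply mul_le_mul_of_nonneg_left (by linarith) (by positivity)
        _ = 2 * B * a / e := by ring
  -- square estimate
  have hsq : ∀ x x' : Euc d, ‖x‖ ≤ B → ‖x' - x‖ ≤ c₂ * η →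
      ‖y - x'‖ ^ 2 ≤ ‖y - x‖ ^ 2 + c₃ * η := by
    intro x x' hxB hxx
    have h1 : ‖y - x'‖ ≤ ‖y - x‖ + c₂ * η := by
      calc ‖y - x'‖ = ‖(y - x) - (x' - x)‖ := by congr 1; abel
        _ ≤ ‖y - x‖ + ‖x' - x‖ := norm_sub_le _ _
        _ ≤ ‖y - x‖ + c₂ * η := by linarith
    have h2 : ‖y - x‖ ≤ ‖y‖ + B := le_trans (norm_sub_le _ _) (by linarith)
    have h4 : c₂ * η ≤ c₂ := mul_le_of_le_one_right hc₂0.le hη1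
    have h5 : ‖y - x'‖ ^ 2 ≤ (‖y - x‖ + c₂ * η) ^ 2 :=
      pow_le_pow_left₀ (norm_nonneg _) h1 2
    have h6 : (0:ℝ) ≤ c₂ * η := by positivity
    have hc₃ : c₃ * η = (2 * (‖y‖ + B) + c₂) * (c₂ * η) := by
      rw [hc₃def]; ring
    nlinarith [norm_nonneg (y - x), h5, h2, h4, h6]
  -- conclusion
  refine ⟨min r η, lt_min hr0 hη0, ?_⟩
  intro t ht hdist
  have hθΘ : t.1 ∈ Θ := ht.1
  have hεpos : (0:ℝ) < t.2 := ht.2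
  have hd1 : dist t.1 t₀.1 < r := by
    have := le_max_left (dist t.1 t₀.1) (dist t.2 t₀.2)
    rw [← Prod.dist_eq] at this
    exact lt_of_le_of_lt this (lt_of_lt_of_le hdist (min_le_left _ _))
  have hd2 : |t.2 - t₀.2| < η := by
    have := le_max_right (dist t.1 t₀.1) (dist t.2 t₀.2)
    rw [← Prod.dist_eq] at this
    rw [← Real.dist_eq]
    exact lt_of_le_of_lt this (lt_of_lt_of_le hdist (min_le_right _ _))
  have hd2' := abs_lt.1 hd2
  have hεle : t.2 ≤ t₀.2 + 1 := by linarith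
  have hεge : t₀.2 / 2 ≤ t.2 := by linarith
  have hvcl := abs_le.1 (hvclose t.1 hθΘ hd1)
  set a : ℝ := (c₁ + 2) * η with hadef
  clear_value a
  have ha0 : (0:ℝ) ≤ a := by
    rw [hadef]; positivity
  have haη : 2 * η ≤ a := by nlinarith
  have hδ4 : (0:ℝ) < δ / 4 := by linarith
  have hr00 : dist t₀.1 t₀.1 < r := by simpa using hr0
  -- upper bound
  have hU : sInf ((fun x => ‖y - x‖ ^ 2) ''
        {x : Euc d | (∀ j, G j x t.1 ≤ t.2) ∧ F x t.1 ≤ v t.1 + t.2})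
      ≤ sInf ((fun x => ‖y - x‖ ^ 2) ''
        {x : Euc d | (∀ j, G j x t₀.1 ≤ t₀.2) ∧ F x t₀.1 ≤ v t₀.1 + t₀.2}) + (δ/4 + c₃ * η) := by
    obtain ⟨w, ⟨x, hxT, rfl⟩, hw⟩ := exists_lt_of_csInf_lt
      ((hTne t₀.1 hθ₀ t₀.2 hε₀.le).image (fun x : Euc d => ‖y - x‖ ^ 2))
      (lt_add_of_pos_right (sInf ((fun x : Euc d => ‖y - x‖ ^ 2) ''
        {x : Euc d | (∀ j, G j x t₀.1 ≤ t₀.2) ∧ F x t₀.1 ≤ v t₀.1 + t₀.2})) hδ4)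
    have hxB : ‖x‖ ≤ B := hub t₀.1 hθ₀ hr00 t₀.2 hε₀.le (by linarith) x hxT.1
    have hxK : x ∈ K := hmemK x hxB
    have hgrel : ∀ j, G j x t.1 ≤ t.2 + a := by
      intro j
      have h1 := abs_le.1 ((hr t.1 hd1 x hxK).2 j)
      have h2 := hxT.1 j
      linarith [h1.2]
    have hfrel : F x t.1 ≤ v t.1 + t.2 + a := by
      have h1 := abs_le.1 (hr t.1 hd1 x hxK).1
      have h2 := hxT.2
      have hc₁2 : a = (c₁ + 2) * η := hadef
      nlinarith [h1.2, hvcl.2]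
    obtain ⟨x', hx'T, hx'd⟩ := hpull t.1 hθΘ t.2 hεpos a ha0 x hxB hgrel hfrel
    have hx'd2 : ‖x' - x‖ ≤ c₂ * η := by
      have hN : (0:ℝ) ≤ 2 * B * a := by nlinarith
      have h1 : 2 * B * a / t.2 ≤ 2 * B * a / (t₀.2 / 2) :=
        div_le_div_of_nonneg_left hN (by linarith) hεge
      have h2 : 2 * B * a / (t₀.2 / 2) = c₂ * η := by
        rw [hadef, hc₂def]
        field_simp
        ring
      linarith
    have hfin : sInf ((fun x => ‖y - x‖ ^ 2) ''
        {x : Euc d | (∀ j, G j x t.1 ≤ t.2) ∧ F x t.1 ≤ v t.1 + t.2}) ≤ ‖y - x'‖ ^ 2 :=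
      csInf_le (hbdd _ _) ⟨x', hx'T, rfl⟩
    have hsq' := hsq x x' hxB hx'd2
    have hw' : ‖y - x‖ ^ 2 < sInf ((fun x => ‖y - x‖ ^ 2) ''
        {x : Euc d | (∀ j, G j x t₀.1 ≤ t₀.2) ∧ F x t₀.1 ≤ v t₀.1 + t₀.2}) + δ/4 := hw
    linarith
  -- lower bound
  have hL : sInf ((fun x => ‖y - x‖ ^ 2) ''
        {x : Euc d | (∀ j, G j x t₀.1 ≤ t₀.2) ∧ F x t₀.1 ≤ v t₀.1 + t₀.2})
      ≤ sInf ((fun x => ‖y - x‖ ^ 2) ''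
        {x : Euc d | (∀ j, G j x t.1 ≤ t.2) ∧ F x t.1 ≤ v t.1 + t.2}) + (δ/4 + c₃ * η) := by
    obtain ⟨w, ⟨x, hxT, rfl⟩, hw⟩ := exists_lt_of_csInf_lt
      ((hTne t.1 hθΘ t.2 hεpos.le).image (fun x : Euc d => ‖y - x‖ ^ 2))
      (lt_add_of_pos_right (sInf ((fun x : Euc d => ‖y - x‖ ^ 2) ''
        {x : Euc d | (∀ j, G j x t.1 ≤ t.2) ∧ F x t.1 ≤ v t.1 + t.2})) hδ4)
    have hxB : ‖x‖ ≤ B := hub t.1 hθΘ hd1 t.2 hεpos.le hεle x hxT.1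
    have hxK : x ∈ K := hmemK x hxB
    have hgrel : ∀ j, G j x t₀.1 ≤ t₀.2 + a := by
      intro j
      have h1 := abs_le.1 ((hr t.1 hd1 x hxK).2 j)
      have h2 := hxT.1 j
      linarith [h1.1]
    have hfrel : F x t₀.1 ≤ v t₀.1 + t₀.2 + a := by
      have h1 := abs_le.1 (hr t.1 hd1 x hxK).1
      have h2 := hxT.2
      nlinarith [h1.1, hvcl.1]
    obtain ⟨x', hx'T, hx'd⟩ := hpull t₀.1 hθ₀ t₀.2 hε₀ a ha0 x hxB hgrel hfrel
    have hx'd2 : ‖x' - x‖ ≤ c₂ * η := by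
      have e : c₂ * η = 4 * B * a / t₀.2 := by
        rw [hadef, hc₂def]
        field_simp
      have h2 : 2 * B * a / t₀.2 ≤ 4 * B * a / t₀.2 := by
        have hBa : (0:ℝ) ≤ B * a := mul_nonneg hB0.le ha0
        exact (div_le_div_iff_of_pos_right hε₀).2 (by nlinarith)
      linarith
    have hfin : sInf ((fun x => ‖y - x‖ ^ 2) ''
        {x : Euc d | (∀ j, G j x t₀.1 ≤ t₀.2) ∧ F x t₀.1 ≤ v t₀.1 + t₀.2}) ≤ ‖y - x'‖ ^ 2 :=
      csInf_le (hbdd _ _) ⟨x', hx'T, rfl⟩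
    have hsq' := hsq x x' hxB hx'd2
    have hw' : ‖y - x‖ ^ 2 < sInf ((fun x => ‖y - x‖ ^ 2) ''
        {x : Euc d | (∀ j, G j x t.1 ≤ t.2) ∧ F x t.1 ≤ v t.1 + t.2}) + δ/4 := hw
    linarith
  rw [Real.dist_eq, abs_lt]
  constructor <;> linarith

/-- Proposition 7: under A1, A2, R1 and joint continuity of `f` and `g`, the
regularized sample-average risk `(θ,ε) ↦ Q_n(θ;ε)` is jointly continuous on
`Θ × (0,∞)`. -/

theorem statement4 {d m p q : ℕ} (n : ℕ)
    (f : Euc d → Euc m → Euc p → ℝ) (g : Euc d → Euc m → Euc p → Fin q → ℝ)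
    (𝒰 : Set (Euc m)) (Θ : Set (Euc p))
    -- joint continuity of f and g
    (hf_cont : Continuous fun t : Euc d × Euc m × Euc p => f t.1 t.2.1 t.2.2)
    (hg_cont : ∀ j, Continuous fun t : Euc d × Euc m × Euc p => g t.1 t.2.1 t.2.2 j)
    -- A1: convexity in x for each fixed (u, θ)
    (hf_conv : ∀ (uu : Euc m) (θθ : Euc p), ConvexOn ℝ Set.univ fun x => f x uu θθ)
    (hg_conv : ∀ (uu : Euc m) (θθ : Euc p) (j : Fin q),
      ConvexOn ℝ Set.univ fun x => g x uu θθ j)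
    -- A2
    (hΘ : Convex ℝ Θ)
    -- R1: nonempty compact feasible sets with Slater points, uniformly bounded
    (hR1 : ∀ uu ∈ 𝒰, ∀ θθ ∈ Θ, IsCompact (Feas g uu θθ) ∧
      ∃ xb ∈ Feas g uu θθ, ∀ j, g xb uu θθ j < 0)
    (hR1bd : ∃ M > 0, ∀ uu ∈ 𝒰, ∀ θθ ∈ Θ, ∀ x ∈ Feas g uu θθ, ‖x‖ ≤ M)
    -- data
    (u : Fin n → Euc m) (y : Fin n → Euc d) (hu : ∀ i, u i ∈ 𝒰) :
    ContinuousOn (fun t : Euc p × ℝ => QnR f g n u y t.1 t.2) (Θ ×ˢ Set.Ioi (0 : ℝ)) := by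
  classical
  obtain ⟨M, hM0, hMbd⟩ := hR1bd
  -- choose minimizers of the forward problem
  have hmin : ∀ (i : Fin n), ∀ θ ∈ Θ, ∃ x : Euc d,
      (∀ j, g x (u i) θ j ≤ 0) ∧
        ∀ z : Euc d, (∀ j, g z (u i) θ j ≤ 0) → f x (u i) θ ≤ f z (u i) θ := by
    intro i θ hθ
    obtain ⟨hcomp, xbb, hxbb, _⟩ := hR1 (u i) (hu i) θ hθ
    have hne : (Feas g (u i) θ).Nonempty := ⟨xbb, hxbb⟩
    have hcont : ContinuousOn (fun x : Euc d => f x (u i) θ) (Feas g (u i) θ) :=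
      (hf_cont.comp
        (continuous_id.prodMk (continuous_const.prodMk continuous_const))).continuousOn
    obtain ⟨x, hx, hxm⟩ := hcomp.exists_isMinOn hne hcont
    exact ⟨x, hx, fun z hz => hxm hz⟩
  choose! xs hxsfeas hxsmin using hmin
  -- the per-sample epsilon-feasible/epsilon-optimal sets coincide with the
  -- value-function description, by strong Lagrangian duality
  have hsetEq : ∀ θ ∈ Θ, ∀ ε : ℝ, 0 < ε → ∀ i : Fin n,
      {z : Euc d | (∀ j, g z (u i) θ j ≤ ε) ∧
        ∃ lam : Fin q → ℝ, (∀ j, 0 ≤ lam j) ∧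
          ∀ x' : Euc d, f z (u i) θ ≤ f x' (u i) θ + ∑ j, lam j * g x' (u i) θ j + ε}
      = {z : Euc d | (∀ j, g z (u i) θ j ≤ ε) ∧
          f z (u i) θ ≤ f (xs i θ) (u i) θ + ε} := by
    intro θ hθ ε hε i
    ext z
    simp only [Set.mem_setOf_eq]
    constructor
    · rintro ⟨hg, lam, hlam, hineq⟩
      refine ⟨hg, ?_⟩
      have h1 := hineq (xs i θ)
      have h2 : (∑ j, lam j * g (xs i θ) (u i) θ j) ≤ 0 :=
        Finset.sum_nonpos fun j _ =>
          mul_nonpos_iff.2 (Or.inl ⟨hlam j, hxsfeas i θ hθ j⟩)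
      linarith
    · rintro ⟨hg, hle⟩
      refine ⟨hg, ?_⟩
      obtain ⟨_, xbb, hxbbfeas, hxbbs⟩ := hR1 (u i) (hu i) θ hθ
      obtain ⟨lam, hlam, hstrong⟩ := strong_duality (fun x => f x (u i) θ)
        (fun j x => g x (u i) θ j) (hf_conv (u i) θ) (fun j => hg_conv (u i) θ j)
        (f (xs i θ) (u i) θ) (fun x hx => hxsmin i θ hθ x hx) xbb hxbbs
      exact ⟨lam, hlam, fun x' => by linarith [hstrong x']⟩
  -- rewrite QnR as an average of per-sample distances on the domain
  have hQeq : ∀ t : Euc p × ℝ, t ∈ Θ ×ˢ Set.Ioi (0:ℝ) →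
      QnR f g n u y t.1 t.2 = (1 / n : ℝ) * ∑ i, sInf ((fun x => ‖y i - x‖ ^ 2) ''
        {z : Euc d | (∀ j, g z (u i) t.1 j ≤ t.2) ∧
          f z (u i) t.1 ≤ f (xs i t.1) (u i) t.1 + t.2}) := by
    intro t ht
    have hθ : t.1 ∈ Θ := ht.1
    have hε : (0:ℝ) < t.2 := ht.2
    have h1 : {x : Fin n → Euc d | ∀ i, (∀ j, g (x i) (u i) t.1 j ≤ t.2) ∧
        ∃ lam : Fin q → ℝ, (∀ j, 0 ≤ lam j) ∧
          ∀ x' : Euc d, f (x i) (u i) t.1 ≤ f x' (u i) t.1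
            + ∑ j, lam j * g x' (u i) t.1 j + t.2}
        = {x : Fin n → Euc d | ∀ i, x i ∈
            {z : Euc d | (∀ j, g z (u i) t.1 j ≤ t.2) ∧
              f z (u i) t.1 ≤ f (xs i t.1) (u i) t.1 + t.2}} := by
      ext x
      simp only [Set.mem_setOf_eq]
      refine forall_congr' fun i => ?_
      exact Set.ext_iff.1 (hsetEq t.1 hθ t.2 hε i) (x i)
    unfold QnR
    rw [h1]
    refine sInf_prod_sum n y _ fun i => ⟨xs i t.1, fun j => le_trans (hxsfeas i t.1 hθ j) hε.le,
      by linarith⟩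
  -- continuity of each per-sample distance function
  have hDc : ∀ i : Fin n, ContinuousOn (fun t : Euc p × ℝ =>
      sInf ((fun x => ‖y i - x‖ ^ 2) '' {x : Euc d | (∀ j, g x (u i) t.1 j ≤ t.2) ∧
        f x (u i) t.1 ≤ f (xs i t.1) (u i) t.1 + t.2})) (Θ ×ˢ Set.Ioi 0) := by
    intro i
    exact Dcont (fun x θ => f x (u i) θ) (fun j x θ => g x (u i) θ j) Θ (y i)
      (hf_cont.comp (continuous_fst.prodMk (continuous_const.prodMk continuous_snd)))
      (fun j => (hg_cont j).comp
        (continuous_fst.prodMk (continuous_const.prodMk continuous_snd)))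
      (fun θ => hf_conv (u i) θ) (fun θ j => hg_conv (u i) θ j)
      M hM0 (fun θ hθ x hx => hMbd (u i) (hu i) θ hθ x hx)
      (fun θ => f (xs i θ) (u i) θ) (fun θ => xs i θ)
      (fun θ hθ => hxsfeas i θ hθ) (fun θ hθ => rfl) (fun θ hθ => hxsmin i θ hθ)
      (fun θ hθ => by
        obtain ⟨_, xbb, _, hs⟩ := hR1 (u i) (hu i) θ hθ
        exact ⟨xbb, hs⟩)
  have hsum : ContinuousOn (fun t : Euc p × ℝ =>
      (1 / n : ℝ) * ∑ i, sInf ((fun x => ‖y i - x‖ ^ 2) ''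
        {x : Euc d | (∀ j, g x (u i) t.1 j ≤ t.2) ∧
          f x (u i) t.1 ≤ f (xs i t.1) (u i) t.1 + t.2})) (Θ ×ˢ Set.Ioi 0) :=
    continuousOn_const.mul (continuousOn_finset_sum Finset.univ fun i _ => hDc i)
  exact hsum.congr fun t ht => hQeq t ht
end
end

section
/- Suppose Assumption A3 holds: g(x,u,θ) = g₀(x,u) does not depend on θ, and f(x,u,θ) = f₀(x,u) + Σ_{j=1}^p θ_j f_j(x,u) is affine in θ. Fix points x̄_i ∈ ℝ^d and u_i ∈ ℝ^m for i = 1,…,n, and let Θ ⊆ ℝ^p be convex. Then the set { (θ, (λ_i)_{i=1}^n, (ε_i)_{i=1}^n) : θ ∈ Θ, and for each i, λ_i ≥ 0 and f(x̄_i,u_i,θ) ≤ f(x',u_i,θ) + ⟨λ_i, g₀(x',u_i)⟩ + ε_i for all x' ∈ ℝ^d } is convex; consequently SP-IOP-RISK-SAA — minimizing the linear objective (1/n) Σ_{i=1}^n ε_i over this set — is a convex optimization problem. -/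
open Set Metric Filter MeasureTheory ProbabilityTheory

noncomputable section

/-- Proposition 12 (convexity of SP-IOP-RISK-SAA): under A3 — the constraints
`g(x,u,θ) = g₀(x,u)` do not depend on `θ` and the objective
`f(x,u,θ) = f₀(x,u) + Σ_j θ_j f_j(x,u)` is affine in `θ` — and convexity of `Θ`,
the feasible set of SP-IOP-RISK-SAA in the variables `(θ, (λ_i), (ε_i))` is convex,
and minimizing the linear objective `(1/n) Σ_i ε_i` over it is a convex problem. -/
theorem statement8 {d m p q : ℕ} (n : ℕ)
    (f0 : Euc d → Euc m → ℝ) (fc : Fin p → Euc d → Euc m → ℝ)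
    (g0 : Euc d → Euc m → Fin q → ℝ)
    (Θ : Set (Euc p)) (hΘ : Convex ℝ Θ)
    (xb : Fin n → Euc d) (u : Fin n → Euc m) :
    Convex ℝ {t : Euc p × (Fin n → Fin q → ℝ) × (Fin n → ℝ) |
      t.1 ∈ Θ ∧ ∀ i, (∀ j, 0 ≤ t.2.1 i j) ∧
        ∀ x' : Euc d,
          f0 (xb i) (u i) + ∑ jp, t.1 jp * fc jp (xb i) (u i) ≤
            (f0 x' (u i) + ∑ jp, t.1 jp * fc jp x' (u i)) +
              ∑ j, t.2.1 i j * g0 x' (u i) j + t.2.2 i} ∧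
    ConvexOn ℝ {t : Euc p × (Fin n → Fin q → ℝ) × (Fin n → ℝ) |
      t.1 ∈ Θ ∧ ∀ i, (∀ j, 0 ≤ t.2.1 i j) ∧
        ∀ x' : Euc d,
          f0 (xb i) (u i) + ∑ jp, t.1 jp * fc jp (xb i) (u i) ≤
            (f0 x' (u i) + ∑ jp, t.1 jp * fc jp x' (u i)) +
              ∑ j, t.2.1 i j * g0 x' (u i) j + t.2.2 i}
      (fun t => (1 / n : ℝ) * ∑ i, t.2.2 i) := by
  have hconv : Convex ℝ {t : Euc p × (Fin n → Fin q → ℝ) × (Fin n → ℝ) |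
      t.1 ∈ Θ ∧ ∀ i, (∀ j, 0 ≤ t.2.1 i j) ∧
        ∀ x' : Euc d,
          f0 (xb i) (u i) + ∑ jp, t.1 jp * fc jp (xb i) (u i) ≤
            (f0 x' (u i) + ∑ jp, t.1 jp * fc jp x' (u i)) +
              ∑ j, t.2.1 i j * g0 x' (u i) j + t.2.2 i} := by
    intro X hX Y hY a b ha hb hab
    refine ⟨hΘ hX.1 hY.1 ha hb hab, fun i => ⟨fun j => ?_, fun x' => ?_⟩⟩
    · have h1 := (hX.2 i).1 j
      have h2 := (hY.2 i).1 j
      simp only [Prod.fst_add, Prod.snd_add, Prod.smul_fst, Prod.smul_snd,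
        Pi.add_apply, Pi.smul_apply, smul_eq_mul]
      positivity
    · have h1 := (hX.2 i).2 x'
      have h2 := (hY.2 i).2 x'
      simp only [Prod.fst_add, Prod.snd_add, Prod.smul_fst, Prod.smul_snd,
        Pi.add_apply, Pi.smul_apply, PiLp.add_apply, PiLp.smul_apply, smul_eq_mul]
      calc f0 (xb i) (u i) + ∑ jp, (a * X.1 jp + b * Y.1 jp) * fc jp (xb i) (u i)
          = a * (f0 (xb i) (u i) + ∑ jp, X.1 jp * fc jp (xb i) (u i))
            + b * (f0 (xb i) (u i) + ∑ jp, Y.1 jp * fc jp (xb i) (u i)) := by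
            simp only [add_mul, Finset.sum_add_distrib, mul_assoc, ← Finset.mul_sum]
            linear_combination (-(f0 (xb i) (u i))) * hab
        _ ≤ a * ((f0 x' (u i) + ∑ jp, X.1 jp * fc jp x' (u i)) +
              ∑ j, X.2.1 i j * g0 x' (u i) j + X.2.2 i)
            + b * ((f0 x' (u i) + ∑ jp, Y.1 jp * fc jp x' (u i)) +
              ∑ j, Y.2.1 i j * g0 x' (u i) j + Y.2.2 i) :=
            add_le_add (mul_le_mul_of_nonneg_left h1 ha) (mul_le_mul_of_nonneg_left h2 hb)
        _ = (f0 x' (u i) + ∑ jp, (a * X.1 jp + b * Y.1 jp) * fc jp x' (u i)) +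
              ∑ j, (a * X.2.1 i j + b * Y.2.1 i j) * g0 x' (u i) j +
              (a * X.2.2 i + b * Y.2.2 i) := by
            simp only [add_mul, Finset.sum_add_distrib, mul_assoc, ← Finset.mul_sum]
            linear_combination (f0 x' (u i)) * hab
  refine ⟨hconv, hconv, fun X _ Y _ a b ha hb hab => le_of_eq ?_⟩
  simp only [Prod.snd_add, Prod.smul_snd, Pi.add_apply, Pi.smul_apply, smul_eq_mul,
    Finset.sum_add_distrib, ← Finset.mul_sum]
  ring
end
end

section
/- Suppose Assumptions A1 (with f and g jointly continuous), A2, R1 and R2 hold in the probabilistic setting, and additionally f(·,u,θ) is strictly convex on ℝ^d for each (u,θ) ∈ 𝒰 × Θ. Let θ̂_n : Ω → Θ be a sequence of measurable estimators that is nearly optimal in probability for the random objectives θ ↦ Q_n^ω(θ). Then Q(θ̂_n) converges in probability to inf{ Q(θ) : θ ∈ Θ }. -/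
open Set Metric Filter MeasureTheory ProbabilityTheory

noncomputable section

/-- The random sample-average risk `Q_n^ω(θ)` of RISK-SAA. -/
def Qnw {d m p q : ℕ} {Ω : Type} (f : Euc d → Euc m → Euc p → ℝ)
    (g : Euc d → Euc m → Euc p → Fin q → ℝ)
    (U : ℕ → Ω → Euc m) (Y : ℕ → Ω → Euc d) (n : ℕ) (ω : Ω) (θ : Euc p) : ℝ :=
  sInf ((fun x : Fin n → Euc d => (1 / n : ℝ) * ∑ i, ‖Y i.val ω - x i‖ ^ 2) ''
    {x | ∀ i : Fin n, x i ∈ Sol f g (U i.val ω) θ})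

/-- The population risk `Q(θ)` of RISK. -/
def Qpop {d m p q : ℕ} {Ω : Type} [MeasurableSpace Ω] (P : Measure Ω)
    (f : Euc d → Euc m → Euc p → ℝ) (g : Euc d → Euc m → Euc p → Fin q → ℝ)
    (U : ℕ → Ω → Euc m) (Y : ℕ → Ω → Euc d) (θ : Euc p) : ℝ :=
  ∫ ω, sInf ((fun x => ‖Y 0 ω - x‖ ^ 2) '' Sol f g (U 0 ω) θ) ∂P

section basic
variable {d m p q : ℕ} {f : Euc d → Euc m → Euc p → ℝ}
  {g : Euc d → Euc m → Euc p → Fin q → ℝ}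

lemma g_cont_x (hg_cont : ∀ j, Continuous fun t : Euc d × Euc m × Euc p => g t.1 t.2.1 t.2.2 j)
    (u : Euc m) (θ : Euc p) (j : Fin q) : Continuous fun x : Euc d => g x u θ j := by
  have : (fun x : Euc d => g x u θ j)
      = (fun t : Euc d × Euc m × Euc p => g t.1 t.2.1 t.2.2 j) ∘ (fun x => (x, u, θ)) := rfl
  rw [this]
  exact (hg_cont j).comp (continuous_id.prodMk continuous_const)

lemma f_cont_x (hf_cont : Continuous fun t : Euc d × Euc m × Euc p => f t.1 t.2.1 t.2.2)
    (u : Euc m) (θ : Euc p) : Continuous fun x : Euc d => f x u θ := by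
  have : (fun x : Euc d => f x u θ)
      = (fun t : Euc d × Euc m × Euc p => f t.1 t.2.1 t.2.2) ∘ (fun x => (x, u, θ)) := rfl
  rw [this]
  exact hf_cont.comp (continuous_id.prodMk continuous_const)

lemma Feas_closed (hg_cont : ∀ j, Continuous fun t : Euc d × Euc m × Euc p => g t.1 t.2.1 t.2.2 j)
    (u : Euc m) (θ : Euc p) : IsClosed (Feas g u θ) := by
  have : Feas g u θ = ⋂ j, {x | g x u θ j ≤ 0} := by
    ext x; simp [Feas]
  rw [this]
  exact isClosed_iInter fun j => isClosed_le (g_cont_x hg_cont u θ j) continuous_const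

lemma Feas_convex (hg_conv : ∀ (uu : Euc m) (θθ : Euc p) (j : Fin q),
      ConvexOn ℝ Set.univ fun x => g x uu θθ j) (u : Euc m) (θ : Euc p) :
    Convex ℝ (Feas g u θ) := by
  have : Feas g u θ = ⋂ j, {x | g x u θ j ≤ 0} := by ext x; simp [Feas]
  rw [this]
  apply convex_iInter
  intro j
  have := (hg_conv u θ j).convex_le 0
  simpa using this

lemma Sol_nonempty (hf_cont : Continuous fun t : Euc d × Euc m × Euc p => f t.1 t.2.1 t.2.2)
    {u : Euc m} {θ : Euc p} (hcpt : IsCompact (Feas g u θ)) (hne : (Feas g u θ).Nonempty) :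
    (Sol f g u θ).Nonempty := by
  obtain ⟨x, hx, hmin⟩ := hcpt.exists_isMinOn hne (f_cont_x hf_cont u θ).continuousOn
  exact ⟨x, hx, fun x' hx' => hmin hx'⟩

lemma Sol_subsingleton (hg_conv : ∀ (uu : Euc m) (θθ : Euc p) (j : Fin q),
      ConvexOn ℝ Set.univ fun x => g x uu θθ j)
    {u : Euc m} {θ : Euc p} (hstrict : StrictConvexOn ℝ Set.univ fun x => f x u θ) :
    (Sol f g u θ).Subsingleton := by
  intro x hx y hy
  by_contra hxy
  have hmid : ((1:ℝ)/2) • x + ((1:ℝ)/2) • y ∈ Feas g u θ :=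
    Feas_convex hg_conv u θ hx.1 hy.1 (by norm_num) (by norm_num) (by norm_num)
  have h1 : f x u θ ≤ f y u θ := hx.2 y hy.1
  have h2 : f y u θ ≤ f x u θ := hy.2 x hx.1
  have heq : f x u θ = f y u θ := le_antisymm h1 h2
  have hs := hstrict.2 (mem_univ x) (mem_univ y) hxy (by norm_num : (0:ℝ) < 1/2)
    (by norm_num : (0:ℝ) < 1/2) (by norm_num)
  simp only [smul_eq_mul] at hs
  have hlt : f (((1:ℝ)/2) • x + ((1:ℝ)/2) • y) u θ < f x u θ := by
    calc f (((1:ℝ)/2) • x + ((1:ℝ)/2) • y) u θ < 1/2 * f x u θ + 1/2 * f y u θ := hs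
    _ = f x u θ := by rw [← heq]; ring
  exact absurd (hx.2 _ hmid) (not_le.mpr hlt)
end basic

section berge
variable {d m p q : ℕ} {f : Euc d → Euc m → Euc p → ℝ}
  {g : Euc d → Euc m → Euc p → Fin q → ℝ} {𝒰 : Set (Euc m)} {Θ : Set (Euc p)}

open scoped Classical in
/-- selection. -/
def sel (f : Euc d → Euc m → Euc p → ℝ) (g : Euc d → Euc m → Euc p → Fin q → ℝ)
    (u : Euc m) (θ : Euc p) : Euc d :=
  if h : (Sol f g u θ).Nonempty then h.choose else 0

lemma sel_mem {u : Euc m} {θ : Euc p} (h : (Sol f g u θ).Nonempty) :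
    sel f g u θ ∈ Sol f g u θ := by
  classical
  rw [sel]
  rw [dif_pos h]
  exact h.choose_spec

lemma Sol_eq_sel {u : Euc m} {θ : Euc p} (hne : (Sol f g u θ).Nonempty)
    (hss : (Sol f g u θ).Subsingleton) : Sol f g u θ = {sel f g u θ} := by
  apply Set.eq_singleton_iff_unique_mem.mpr
  exact ⟨sel_mem hne, fun x hx => hss hx (sel_mem hne)⟩

/-- strictly feasible approximations via Slater point -/
lemma strict_approx
    (hg_conv : ∀ (uu : Euc m) (θθ : Euc p) (j : Fin q), ConvexOn ℝ Set.univ fun x => g x uu θθ j)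
    {u : Euc m} {θ : Euc p} {xb : Euc d} (hxb : ∀ j, g xb u θ j < 0)
    {x : Euc d} (hx : x ∈ Feas g u θ) {ε : ℝ} (hε : 0 < ε) :
    ∃ xt : Euc d, ‖xt - x‖ ≤ ε ∧ ∀ j, g xt u θ j < 0 := by
  set t : ℝ := min 1 (ε / (‖xb - x‖ + 1)) with ht
  have hnorm : (0:ℝ) < ‖xb - x‖ + 1 := by positivity
  have ht0 : 0 < t := lt_min one_pos (by positivity)
  have ht1 : t ≤ 1 := min_le_left _ _
  refine ⟨(1 - t) • x + t • xb, ?_, ?_⟩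
  · have : (1 - t) • x + t • xb - x = t • (xb - x) := by
      rw [smul_sub, sub_smul, one_smul]; abel
    rw [this, norm_smul]
    have habs : ‖(t:ℝ)‖ = t := abs_of_pos ht0
    rw [habs]
    have h2 : t ≤ ε / (‖xb - x‖ + 1) := min_le_right _ _
    calc t * ‖xb - x‖ ≤ (ε / (‖xb - x‖ + 1)) * ‖xb - x‖ := by
          apply mul_le_mul_of_nonneg_right h2 (norm_nonneg _)
      _ ≤ ε := by
          rw [div_mul_eq_mul_div, div_le_iff₀ hnorm]
          nlinarith [norm_nonneg (xb - x)]
  · intro j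
    have hconv := (hg_conv u θ j).2 (Set.mem_univ x) (Set.mem_univ xb)
      (by linarith : (0:ℝ) ≤ 1 - t) ht0.le (by ring)
    simp only [smul_eq_mul] at hconv
    have hgx : g x u θ j ≤ 0 := hx j
    have : (1 - t) * g x u θ j + t * g xb u θ j < 0 := by
      have h1 : (1 - t) * g x u θ j ≤ 0 := mul_nonpos_of_nonneg_of_nonpos (by linarith) hgx
      have h2 : t * g xb u θ j < 0 := mul_neg_of_pos_of_neg ht0 (hxb j)
      linarith
    exact lt_of_le_of_lt hconv this

/-- a fixed strictly feasible point is eventually feasible along a convergent parameter sequence -/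
lemma slater_eventually
    (hg_cont : ∀ j, Continuous fun t : Euc d × Euc m × Euc p => g t.1 t.2.1 t.2.2 j)
    {u : Euc m} {θ : Euc p} {w : ℕ → Euc m × Euc p}
    (hlim : Tendsto w atTop (nhds (u, θ)))
    {xt : Euc d} (hxt : ∀ j, g xt u θ j < 0) :
    ∀ᶠ k in atTop, xt ∈ Feas g (w k).1 (w k).2 := by
  have h : ∀ᶠ k in atTop, ∀ j, g xt (w k).1 (w k).2 j < 0 := by
    rw [eventually_all]
    intro j
    have hc : Tendsto (fun k => g xt (w k).1 (w k).2 j) atTop (nhds (g xt u θ j)) := by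
      have := ((hg_cont j).tendsto (xt, u, θ)).comp
        ((tendsto_const_nhds : Tendsto (fun _ : ℕ => xt) atTop (nhds xt)).prodMk_nhds hlim)
      exact this
    exact hc.eventually_lt_const (hxt j)
  filter_upwards [h] with k hk j
  exact (hk j).le
end berge

section berge2
variable {d m p q : ℕ} {f : Euc d → Euc m → Euc p → ℝ}
  {g : Euc d → Euc m → Euc p → Fin q → ℝ} {𝒰 : Set (Euc m)} {Θ : Set (Euc p)}

lemma f_cont_x' (hf_cont : Continuous fun t : Euc d × Euc m × Euc p => f t.1 t.2.1 t.2.2)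
    (u : Euc m) (θ : Euc p) : Continuous fun x : Euc d => f x u θ := by
  have : (fun x : Euc d => f x u θ)
      = (fun t : Euc d × Euc m × Euc p => f t.1 t.2.1 t.2.2) ∘ (fun x => (x, u, θ)) := rfl
  rw [this]; exact hf_cont.comp (continuous_id.prodMk continuous_const)

/-- Berge-type sequential continuity of the selection on 𝒰 × Θ. -/
lemma sel_seq_tendsto
    (hf_cont : Continuous fun t : Euc d × Euc m × Euc p => f t.1 t.2.1 t.2.2)
    (hg_cont : ∀ j, Continuous fun t : Euc d × Euc m × Euc p => g t.1 t.2.1 t.2.2 j)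
    (hg_conv : ∀ (uu : Euc m) (θθ : Euc p) (j : Fin q), ConvexOn ℝ Set.univ fun x => g x uu θθ j)
    (hSol : ∀ uu ∈ 𝒰, ∀ θθ ∈ Θ, Sol f g uu θθ = {sel f g uu θθ})
    (hR1 : ∀ uu ∈ 𝒰, ∀ θθ ∈ Θ, IsCompact (Feas g uu θθ) ∧
      ∃ xb ∈ Feas g uu θθ, ∀ j, g xb uu θθ j < 0)
    {M : ℝ} (hM : ∀ uu ∈ 𝒰, ∀ θθ ∈ Θ, ∀ x ∈ Feas g uu θθ, ‖x‖ ≤ M)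
    {u : Euc m} {θ : Euc p} (hu : u ∈ 𝒰) (hθ : θ ∈ Θ)
    {w : ℕ → Euc m × Euc p} (hw : ∀ k, (w k).1 ∈ 𝒰 ∧ (w k).2 ∈ Θ)
    (hlim : Tendsto w atTop (nhds (u, θ))) :
    Tendsto (fun k => sel f g (w k).1 (w k).2) atTop (nhds (sel f g u θ)) := by
  have hselSol : ∀ uu ∈ 𝒰, ∀ θθ ∈ Θ, sel f g uu θθ ∈ Sol f g uu θθ := by
    intro uu huu θθ hθθ
    rw [hSol uu huu θθ hθθ]; exact Set.mem_singleton _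
  apply tendsto_of_subseq_tendsto
  intro ns hns
  set v : ℕ → Euc m × Euc p := w ∘ ns with hvdef
  have hvmem : ∀ k, (v k).1 ∈ 𝒰 ∧ (v k).2 ∈ Θ := fun k => hw (ns k)
  have hv : Tendsto v atTop (nhds (u, θ)) := hlim.comp hns
  set xk : ℕ → Euc d := fun k => sel f g (v k).1 (v k).2 with hxkdef
  have hxkSol : ∀ k, xk k ∈ Sol f g (v k).1 (v k).2 :=
    fun k => hselSol _ (hvmem k).1 _ (hvmem k).2
  have hxkB : ∀ k, xk k ∈ closedBall (0 : Euc d) M := by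
    intro k
    rw [mem_closedBall_zero_iff]
    exact hM _ (hvmem k).1 _ (hvmem k).2 _ (hxkSol k).1
  obtain ⟨a, haB, φ, hφ, hxa⟩ := (isCompact_closedBall (0 : Euc d) M).tendsto_subseq hxkB
  refine ⟨φ, ?_⟩
  have hvφ : Tendsto (fun n => v (φ n)) atTop (nhds (u, θ)) := hv.comp hφ.tendsto_atTop
  have htriple : Tendsto (fun n => ((xk (φ n)), v (φ n))) atTop (nhds (a, (u, θ))) :=
    hxa.prodMk_nhds hvφ
  have haSol : a ∈ Sol f g u θ := by
    refine ⟨?_, ?_⟩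
    · intro j
      have htr : Tendsto (fun n => g (xk (φ n)) (v (φ n)).1 (v (φ n)).2 j) atTop
          (nhds (g a u θ j)) := ((hg_cont j).tendsto (a, u, θ)).comp htriple
      exact le_of_tendsto htr (Eventually.of_forall fun n => (hxkSol (φ n)).1 j)
    · intro x' hx'
      obtain ⟨-, xb, hxbF, hxbS⟩ := hR1 u hu θ hθ
      have ev : ∀ xt : Euc d, (∀ j, g xt u θ j < 0) → f a u θ ≤ f xt u θ := by
        intro xt hxt
        have hev := slater_eventually hg_cont hvφ hxt
        have h1 : ∀ᶠ n in atTop, f (xk (φ n)) (v (φ n)).1 (v (φ n)).2 ≤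
            f xt (v (φ n)).1 (v (φ n)).2 := by
          filter_upwards [hev] with n hn
          exact (hxkSol (φ n)).2 xt hn
        have t1 : Tendsto (fun n => f (xk (φ n)) (v (φ n)).1 (v (φ n)).2) atTop
            (nhds (f a u θ)) := (hf_cont.tendsto (a, u, θ)).comp htriple
        have t2 : Tendsto (fun n => f xt (v (φ n)).1 (v (φ n)).2) atTop
            (nhds (f xt u θ)) := (hf_cont.tendsto (xt, u, θ)).comp
            (tendsto_const_nhds.prodMk_nhds hvφ)
        exact le_of_tendsto_of_tendsto t1 t2 h1
      have seq : ∀ ℓ : ℕ, ∃ xt : Euc d, ‖xt - x'‖ ≤ 1 / (ℓ + 1) ∧ ∀ j, g xt u θ j < 0 :=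
        fun ℓ => strict_approx hg_conv hxbS hx' (by positivity)
      choose xt hxt1 hxt2 using seq
      have hxtlim : Tendsto xt atTop (nhds x') := by
        rw [tendsto_iff_dist_tendsto_zero]
        have hb : ∀ ℓ : ℕ, dist (xt ℓ) x' ≤ 1 / ((ℓ : ℝ) + 1) := by
          intro ℓ; rw [dist_eq_norm]; exact_mod_cast hxt1 ℓ
        exact squeeze_zero (fun ℓ => dist_nonneg) hb tendsto_one_div_add_atTop_nhds_zero_nat
      have hflim : Tendsto (fun ℓ => f (xt ℓ) u θ) atTop (nhds (f x' u θ)) :=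
        ((f_cont_x' hf_cont u θ).tendsto x').comp hxtlim
      exact ge_of_tendsto hflim (Eventually.of_forall fun ℓ => ev (xt ℓ) (hxt2 ℓ))
  have haEq : a = sel f g u θ := by
    have := hSol u hu θ hθ
    rw [this] at haSol
    exact haSol
  rw [← haEq]
  exact hxa
end berge2

/-- Sequential criterion for ContinuousOn. -/
lemma seqContinuousOn {X Y : Type*} [TopologicalSpace X] [FirstCountableTopology X]
    [TopologicalSpace Y] {F : X → Y} {s : Set X}
    (h : ∀ z ∈ s, ∀ w : ℕ → X, (∀ k, w k ∈ s) → Tendsto w atTop (nhds z) →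
      Tendsto (fun k => F (w k)) atTop (nhds (F z))) : ContinuousOn F s := by
  classical
  intro z hz
  rw [ContinuousWithinAt, tendsto_iff_seq_tendsto]
  intro w hw
  rw [tendsto_nhdsWithin_iff] at hw
  obtain ⟨hw1, hw2⟩ := hw
  set w' : ℕ → X := fun k => if w k ∈ s then w k else z with hw'
  have hmem : ∀ k, w' k ∈ s := by
    intro k; simp only [hw']; split
    · assumption
    · exact hz
  have htend : Tendsto w' atTop (nhds z) := by
    apply hw1.congr'
    filter_upwards [hw2] with k hk
    simp [hw', hk]
  have := h z hz w' hmem htend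
  apply this.congr'
  filter_upwards [hw2] with k hk
  simp [hw', hk]

section wald
variable {d m p q : ℕ} {f : Euc d → Euc m → Euc p → ℝ}
  {g : Euc d → Euc m → Euc p → Fin q → ℝ} {𝒰 : Set (Euc m)} {Θ : Set (Euc p)}

/-- the inf-function over a parameter set K -/
def mK (f : Euc d → Euc m → Euc p → ℝ) (g : Euc d → Euc m → Euc p → Fin q → ℝ)
    (K : Set (Euc p)) (z : Euc m × Euc d) : ℝ :=
  sInf ((fun θ' => ‖z.2 - sel f g z.1 θ'‖ ^ 2) '' K)

lemma mK_bddBelow {K : Set (Euc p)} (z : Euc m × Euc d) :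
    BddBelow ((fun θ' => ‖z.2 - sel f g z.1 θ'‖ ^ 2) '' K) :=
  ⟨0, fun r ⟨θ', _, hθ'⟩ => hθ' ▸ by positivity⟩

lemma mK_nonneg {K : Set (Euc p)} (z : Euc m × Euc d) : 0 ≤ mK f g K z := by
  rcases Set.eq_empty_or_nonempty ((fun θ' => ‖z.2 - sel f g z.1 θ'‖ ^ 2) '' K) with h | h
  · rw [mK, h, Real.sInf_empty]
  · exact le_csInf h fun b ⟨θ', _, hθ'⟩ => hθ' ▸ by positivity

lemma mK_le {K : Set (Euc p)} {z : Euc m × Euc d} {θ' : Euc p} (hθ' : θ' ∈ K) :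
    mK f g K z ≤ ‖z.2 - sel f g z.1 θ'‖ ^ 2 :=
  csInf_le (mK_bddBelow z) ⟨θ', hθ', rfl⟩

/-- continuity in θ of the fiber function, for fixed u ∈ 𝒰 -/
lemma fiber_contOn (hselC : ContinuousOn (fun z : Euc m × Euc p => sel f g z.1 z.2) (𝒰 ×ˢ Θ))
    {u : Euc m} (hu : u ∈ 𝒰) (y : Euc d) :
    ContinuousOn (fun θ' => ‖y - sel f g u θ'‖ ^ 2) Θ := by
  have h1 : ContinuousOn (fun θ' : Euc p => sel f g u θ') Θ := by
    have : (fun θ' : Euc p => sel f g u θ')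
        = (fun z : Euc m × Euc p => sel f g z.1 z.2) ∘ (fun θ' => (u, θ')) := rfl
    rw [this]
    exact hselC.comp (continuous_const.prodMk continuous_id).continuousOn
      (fun θ' hθ' => Set.mk_mem_prod hu hθ')
  exact ((continuousOn_const.sub h1).norm).pow 2

lemma mK_attained (hselC : ContinuousOn (fun z : Euc m × Euc p => sel f g z.1 z.2) (𝒰 ×ˢ Θ))
    {K : Set (Euc p)} (hKcpt : IsCompact K) (hKne : K.Nonempty) (hKΘ : K ⊆ Θ)
    {u : Euc m} (hu : u ∈ 𝒰) (y : Euc d) :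
    ∃ θA ∈ K, mK f g K (u, y) = ‖y - sel f g u θA‖ ^ 2 := by
  obtain ⟨θA, hθA, hmin⟩ := hKcpt.exists_isMinOn hKne
    ((fiber_contOn hselC hu y).mono hKΘ)
  refine ⟨θA, hθA, le_antisymm (mK_le hθA) ?_⟩
  exact le_csInf (hKne.image _) fun b ⟨θ', hθ', hb⟩ => hb ▸ hmin hθ'

set_option maxHeartbeats 1000000 in
/-- sequential continuity of mK on 𝒰 × ℝ^d -/
lemma mK_seq
    (hselC : ContinuousOn (fun z : Euc m × Euc p => sel f g z.1 z.2) (𝒰 ×ˢ Θ))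
    {K : Set (Euc p)} (hKcpt : IsCompact K) (hKne : K.Nonempty) (hKΘ : K ⊆ Θ)
    {z : Euc m × Euc d} (hz : z.1 ∈ 𝒰) {w : ℕ → Euc m × Euc d} (hw : ∀ k, (w k).1 ∈ 𝒰)
    (hlim : Tendsto w atTop (nhds z)) :
    Tendsto (fun k => mK f g K (w k)) atTop (nhds (mK f g K z)) := by
  -- limits of components
  have hu_lim : Tendsto (fun k => (w k).1) atTop (nhds z.1) :=
    (continuous_fst.tendsto z).comp hlim
  have hy_lim : Tendsto (fun k => (w k).2) atTop (nhds z.2) :=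
    (continuous_snd.tendsto z).comp hlim
  apply tendsto_of_subseq_tendsto
  intro ns hns
  -- attainers
  have hatt : ∀ k : ℕ, ∃ θA ∈ K, mK f g K (w (ns k)) = ‖(w (ns k)).2 - sel f g (w (ns k)).1 θA‖ ^ 2 :=
    fun k => mK_attained hselC hKcpt hKne hKΘ (hw (ns k)) _
  choose θA hθAK hθAval using hatt
  obtain ⟨θb, hθbK, ms, hms, hθtend⟩ := hKcpt.tendsto_subseq hθAK
  refine ⟨ms, ?_⟩
  -- the pair sequence (u_k, θA_k) ∘ ms tends to (z.1, θb) within 𝒰 ×ˢ Θ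
  have hpair : Tendsto (fun j => ((w (ns (ms j))).1, θA (ms j))) atTop (nhds (z.1, θb)) :=
    ((hu_lim.comp hns).comp hms.tendsto_atTop).prodMk_nhds hθtend
  have hseltend : Tendsto (fun j => sel f g (w (ns (ms j))).1 (θA (ms j))) atTop
      (nhds (sel f g z.1 θb)) := by
    have hsc := hselC (z.1, θb) (Set.mk_mem_prod hz (hKΘ hθbK))
    rw [ContinuousWithinAt, tendsto_iff_seq_tendsto] at hsc
    exact hsc (fun j => ((w (ns (ms j))).1, θA (ms j)))
      (by rw [tendsto_nhdsWithin_iff]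
          exact ⟨hpair, Eventually.of_forall fun j =>
            Set.mk_mem_prod (hw (ns (ms j))) (hKΘ (hθAK (ms j)))⟩)
  have hval : Tendsto (fun j => mK f g K (w (ns (ms j)))) atTop
      (nhds (‖z.2 - sel f g z.1 θb‖ ^ 2)) := by
    have : Tendsto (fun j => ‖(w (ns (ms j))).2 - sel f g (w (ns (ms j))).1 (θA (ms j))‖ ^ 2)
        atTop (nhds (‖z.2 - sel f g z.1 θb‖ ^ 2)) := by
      apply Tendsto.pow
      apply Tendsto.norm
      exact Tendsto.sub ((hy_lim.comp hns).comp hms.tendsto_atTop) hseltend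
    exact this.congr fun j => (hθAval (ms j)).symm
  -- identify the limit with mK z
  have hle1 : mK f g K z ≤ ‖z.2 - sel f g z.1 θb‖ ^ 2 := mK_le hθbK
  have hle2 : ‖z.2 - sel f g z.1 θb‖ ^ 2 ≤ mK f g K z := by
    obtain ⟨θ0, hθ0K, hθ0val⟩ := mK_attained hselC hKcpt hKne hKΘ hz z.2
    rw [hθ0val]
    -- limit of mK(w ..) ≤ limit of fiber at θ0
    have hub : ∀ᶠ j in atTop, mK f g K (w (ns (ms j))) ≤
        ‖(w (ns (ms j))).2 - sel f g (w (ns (ms j))).1 θ0‖ ^ 2 :=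
      Eventually.of_forall fun j => mK_le hθ0K
    have hsel0 : Tendsto (fun j => sel f g (w (ns (ms j))).1 θ0) atTop
        (nhds (sel f g z.1 θ0)) := by
      have hsc := hselC (z.1, θ0) (Set.mk_mem_prod hz (hKΘ hθ0K))
      rw [ContinuousWithinAt, tendsto_iff_seq_tendsto] at hsc
      exact hsc (fun j => ((w (ns (ms j))).1, θ0))
        (by rw [tendsto_nhdsWithin_iff]
            exact ⟨((hu_lim.comp hns).comp hms.tendsto_atTop).prodMk_nhds tendsto_const_nhds,
              Eventually.of_forall fun j => Set.mk_mem_prod (hw (ns (ms j))) (hKΘ hθ0K)⟩)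
    have ht0 : Tendsto (fun j => ‖(w (ns (ms j))).2 - sel f g (w (ns (ms j))).1 θ0‖ ^ 2) atTop
        (nhds (‖z.2 - sel f g z.1 θ0‖ ^ 2)) := by
      apply Tendsto.pow; apply Tendsto.norm
      exact Tendsto.sub ((hy_lim.comp hns).comp hms.tendsto_atTop) hsel0
    exact le_of_tendsto_of_tendsto hval ht0 hub
  have : ‖z.2 - sel f g z.1 θb‖ ^ 2 = mK f g K z := le_antisymm hle2 hle1
  rw [← this]
  exact hval
end wald

section tietze
variable {d m p q : ℕ} {f : Euc d → Euc m → Euc p → ℝ}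
  {g : Euc d → Euc m → Euc p → Fin q → ℝ} {𝒰 : Set (Euc m)} {Θ : Set (Euc p)}

lemma mK_singleton (θ₀ : Euc p) (z : Euc m × Euc d) :
    mK f g {θ₀} z = ‖z.2 - sel f g z.1 θ₀‖ ^ 2 := by
  rw [mK, Set.image_singleton, csInf_singleton]

/-- measurable (indeed continuous) clamped extension of mK off 𝒰 × ℝ^d -/
lemma exists_psi (h𝒰closed : IsClosed 𝒰)
    (hselC : ContinuousOn (fun z : Euc m × Euc p => sel f g z.1 z.2) (𝒰 ×ˢ Θ))
    {K : Set (Euc p)} (hKcpt : IsCompact K) (hKne : K.Nonempty) (hKΘ : K ⊆ Θ)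
    {M : ℝ} (hM0 : 0 ≤ M)
    (hMsel : ∀ u ∈ 𝒰, ∀ θ' ∈ Θ, ‖sel f g u θ'‖ ≤ M) :
    ∃ Ψ : Euc m × Euc d → ℝ, Continuous Ψ ∧ (∀ z, 0 ≤ Ψ z) ∧
      (∀ z, Ψ z ≤ (‖z.2‖ + M) ^ 2) ∧
      (∀ z : Euc m × Euc d, z.1 ∈ 𝒰 → Ψ z = mK f g K z) := by
  have hclosed : IsClosed (𝒰 ×ˢ (Set.univ : Set (Euc d))) := h𝒰closed.prod isClosed_univ
  have hcont : ContinuousOn (mK f g K) (𝒰 ×ˢ (Set.univ : Set (Euc d))) :=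
    seqContinuousOn (fun z hz w hw hlim =>
      mK_seq hselC hKcpt hKne hKΘ hz.1 (fun k => (hw k).1) hlim)
  obtain ⟨G, hG⟩ := ContinuousMap.exists_restrict_eq hclosed
    ⟨_, hcont.restrict⟩
  have hGeq : ∀ z : Euc m × Euc d, z.1 ∈ 𝒰 → G z = mK f g K z := by
    intro z hz
    have := DFunLike.congr_fun hG (⟨z, Set.mk_mem_prod hz (Set.mem_univ _)⟩ :
      (𝒰 ×ˢ (Set.univ : Set (Euc d))))
    exact this
  have hmKbd : ∀ z : Euc m × Euc d, z.1 ∈ 𝒰 → mK f g K z ≤ (‖z.2‖ + M) ^ 2 := by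
    intro z hz
    obtain ⟨θ', hθ'⟩ := hKne
    refine le_trans (mK_le hθ') ?_
    have h1 : ‖z.2 - sel f g z.1 θ'‖ ≤ ‖z.2‖ + M :=
      le_trans (norm_sub_le _ _) (by linarith [hMsel z.1 hz θ' (hKΘ hθ')])
    exact pow_le_pow_left₀ (norm_nonneg _) h1 2
  refine ⟨fun z => max 0 (min (G z) ((‖z.2‖ + M) ^ 2)), ?_, ?_, ?_, ?_⟩
  · apply continuous_const.max
    exact G.continuous.min (((continuous_snd.norm).add continuous_const).pow 2)
  · intro z; exact le_max_left _ _
  · intro z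
    apply max_le (by positivity)
    exact min_le_right _ _
  · intro z hz
    simp only
    rw [hGeq z hz, min_eq_left (hmKbd z hz), max_eq_right (mK_nonneg z)]
end tietze

section lln
variable {md dd : ℕ} {Ω : Type} [MeasurableSpace Ω] {P : Measure Ω} [IsProbabilityMeasure P]

/-- WLLN-type consequence of SLLN for bounded-by-square functionals of iid pairs -/
lemma lln_prob (U : ℕ → Ω → Euc md) (Y : ℕ → Ω → Euc dd)
    (hUmeas : ∀ i, Measurable (U i)) (hYmeas : ∀ i, Measurable (Y i))
    (hindep : iIndepFun (fun i ω => (U i ω, Y i ω)) P)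
    (hident : ∀ i, Measure.map (fun ω => (U i ω, Y i ω)) P =
      Measure.map (fun ω => (U 0 ω, Y 0 ω)) P)
    (hy2 : Integrable (fun ω => ‖Y 0 ω‖ ^ 2) P)
    {M : ℝ} (Ψ : Euc md × Euc dd → ℝ) (hΨm : Measurable Ψ)
    (hΨ0 : ∀ z, 0 ≤ Ψ z) (hΨbd : ∀ z, Ψ z ≤ (‖z.2‖ + M) ^ 2)
    {ε : ℝ} (hε : 0 < ε) :
    Tendsto (fun n : ℕ => P {ω | ε ≤
      |(n : ℝ)⁻¹ * ∑ i ∈ Finset.range n, Ψ (U i ω, Y i ω) -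
        ∫ ω', Ψ (U 0 ω', Y 0 ω') ∂P|}) atTop (nhds 0) := by
  set Z : ℕ → Ω → Euc md × Euc dd := fun i ω => (U i ω, Y i ω) with hZ
  have hZmeas : ∀ i, Measurable (Z i) := fun i => (hUmeas i).prodMk (hYmeas i)
  set X : ℕ → Ω → ℝ := fun i ω => Ψ (Z i ω) with hX
  have hXmeas : ∀ i, Measurable (X i) := fun i => hΨm.comp (hZmeas i)
  -- integrability
  have hDint : Integrable (fun ω => (‖Y 0 ω‖ + M) ^ 2) P := by
    have hbd : Integrable (fun ω => 2 * ‖Y 0 ω‖ ^ 2 + 2 * M ^ 2) P :=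
      (hy2.const_mul 2).add (integrable_const _)
    apply Integrable.mono' hbd
    · exact (((hYmeas 0).norm.aemeasurable.add_const M).pow_const 2).aestronglyMeasurable
    · filter_upwards with ω
      rw [Real.norm_eq_abs, abs_of_nonneg (by positivity)]
      nlinarith [norm_nonneg (Y 0 ω), sq_nonneg (‖Y 0 ω‖ - M)]
  have hXint : Integrable (X 0) P := by
    apply Integrable.mono' hDint (hXmeas 0).aestronglyMeasurable
    filter_upwards with ω
    rw [Real.norm_eq_abs, abs_of_nonneg (hΨ0 _)]
    exact hΨbd _
  -- independence and identical distribution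
  have hpairwise : Pairwise (Function.onFun (fun x1 x2 => IndepFun x1 x2 P) X) := by
    intro i j hij
    exact (hindep.indepFun hij).comp hΨm hΨm
  have hid : ∀ i, IdentDistrib (X i) (X 0) P P := by
    intro i
    exact (⟨(hZmeas i).aemeasurable, (hZmeas 0).aemeasurable, hident i⟩ :
      IdentDistrib (Z i) (Z 0) P P).comp hΨm
  have hslln := strong_law_ae X hXint hpairwise hid
  -- convert to in-measure
  have hmeasAvg : ∀ n : ℕ, AEStronglyMeasurable
      (fun ω => (n : ℝ)⁻¹ * ∑ i ∈ Finset.range n, X i ω) P := by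
    intro n
    exact (Measurable.const_mul (Finset.measurable_sum _ fun i _ => hXmeas i) _).aestronglyMeasurable
  have htim : MeasureTheory.TendstoInMeasure P
      (fun (n : ℕ) ω => (n : ℝ)⁻¹ * ∑ i ∈ Finset.range n, X i ω) atTop
      (fun _ => ∫ ω', X 0 ω' ∂P) := by
    apply MeasureTheory.tendstoInMeasure_of_tendsto_ae hmeasAvg
    filter_upwards [hslln] with ω hω
    simpa [smul_eq_mul] using hω
  simpa only [Real.dist_eq] using tendstoInMeasure_iff_dist.mp htim ε hε
end lln

set_option maxHeartbeats 2000000 in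
/-- Theorem 5 (risk consistency under strict convexity): under A1 (with joint
continuity), A2, R1, R2 and strict convexity of `f(·,u,θ)` on `𝒰 × Θ`, if the
measurable estimators `θ̂_n` are nearly optimal in probability for `θ ↦ Q_n^ω(θ)`,
then `Q(θ̂_n)` converges in probability to `inf{ Q(θ) : θ ∈ Θ }`. -/
theorem statement10 {d m p q : ℕ}
    (f : Euc d → Euc m → Euc p → ℝ) (g : Euc d → Euc m → Euc p → Fin q → ℝ)
    (𝒰 : Set (Euc m)) (Θ : Set (Euc p))
    (Ω : Type) [MeasurableSpace Ω] (P : Measure Ω) [IsProbabilityMeasure P]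
    (U : ℕ → Ω → Euc m) (Y : ℕ → Ω → Euc d)
    (hUmeas : ∀ i, Measurable (U i)) (hYmeas : ∀ i, Measurable (Y i))
    -- the pairs (u_i, y_i) are i.i.d.
    (hindep : iIndepFun (fun i ω => (U i ω, Y i ω)) P)
    (hident : ∀ i, Measure.map (fun ω => (U i ω, Y i ω)) P =
      Measure.map (fun ω => (U 0 ω, Y 0 ω)) P)
    -- 𝒰 is closed and carries the distribution of u
    (h𝒰closed : IsClosed 𝒰) (h𝒰full : P {ω | U 0 ω ∈ 𝒰} = 1)
    -- A1, with joint continuity of f and g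
    (hf_cont : Continuous fun t : Euc d × Euc m × Euc p => f t.1 t.2.1 t.2.2)
    (hg_cont : ∀ j, Continuous fun t : Euc d × Euc m × Euc p => g t.1 t.2.1 t.2.2 j)
    (hf_conv : ∀ (uu : Euc m) (θθ : Euc p), ConvexOn ℝ Set.univ fun x => f x uu θθ)
    (hg_conv : ∀ (uu : Euc m) (θθ : Euc p) (j : Fin q),
      ConvexOn ℝ Set.univ fun x => g x uu θθ j)
    -- strict convexity of f(·,u,θ) on 𝒰 × Θ
    (hf_strict : ∀ uu ∈ 𝒰, ∀ θθ ∈ Θ, StrictConvexOn ℝ Set.univ fun x => f x uu θθ)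
    -- A2
    (hΘ : Convex ℝ Θ)
    -- R1
    (hR1 : ∀ uu ∈ 𝒰, ∀ θθ ∈ Θ, IsCompact (Feas g uu θθ) ∧
      ∃ xb ∈ Feas g uu θθ, ∀ j, g xb uu θθ j < 0)
    (hR1bd : ∃ M > 0, ∀ uu ∈ 𝒰, ∀ θθ ∈ Θ, ∀ x ∈ Feas g uu θθ, ‖x‖ ≤ M)
    -- R2
    (hΘcpt : IsCompact Θ) (hy2 : Integrable (fun ω => ‖Y 0 ω‖ ^ 2) P)
    -- the estimators, nearly optimal in probability for Q_n^ω
    (θh : ℕ → Ω → Euc p) (hθmeas : ∀ n, Measurable (θh n))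
    (hθmem : ∀ n ω, θh n ω ∈ Θ)
    (hnearopt : ∀ δ > (0 : ℝ), Tendsto (fun n => P {ω |
      Metric.infDist (θh n ω)
        {θ ∈ Θ | ∀ θ' ∈ Θ, Qnw f g U Y n ω θ ≤ Qnw f g U Y n ω θ'} > δ})
      atTop (nhds 0)) :
    -- conclusion: Q(θ̂_n) →p inf{Q(θ) : θ ∈ Θ}
    ∀ δ > (0 : ℝ), Tendsto (fun n => P {ω |
      |Qpop P f g U Y (θh n ω) - sInf (Qpop P f g U Y '' Θ)| > δ})
      atTop (nhds 0) := by
  classical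
  obtain ⟨M, hMpos, hMbd⟩ := hR1bd
  -- basic facts about Sol and sel
  have hSolNe : ∀ uu ∈ 𝒰, ∀ θθ ∈ Θ, (Sol f g uu θθ).Nonempty := by
    intro uu hu θθ hθ
    obtain ⟨hcpt, xb, hxbF, _⟩ := hR1 uu hu θθ hθ
    exact Sol_nonempty hf_cont hcpt ⟨xb, hxbF⟩
  have hSol : ∀ uu ∈ 𝒰, ∀ θθ ∈ Θ, Sol f g uu θθ = {sel f g uu θθ} :=
    fun uu hu θθ hθ => Sol_eq_sel (hSolNe uu hu θθ hθ)
      (Sol_subsingleton hg_conv (hf_strict uu hu θθ hθ))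
  have hselSol : ∀ uu ∈ 𝒰, ∀ θθ ∈ Θ, sel f g uu θθ ∈ Sol f g uu θθ := by
    intro uu hu θθ hθ; rw [hSol uu hu θθ hθ]; exact Set.mem_singleton _
  have hselM : ∀ uu ∈ 𝒰, ∀ θθ ∈ Θ, ‖sel f g uu θθ‖ ≤ M :=
    fun uu hu θθ hθ => hMbd uu hu θθ hθ _ (hselSol uu hu θθ hθ).1
  have hselC : ContinuousOn (fun z : Euc m × Euc p => sel f g z.1 z.2) (𝒰 ×ˢ Θ) := by
    apply seqContinuousOn
    intro z hz w hw hlim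
    have hlim' : Tendsto w atTop (nhds (z.1, z.2)) := by rw [Prod.mk.eta]; exact hlim
    exact sel_seq_tendsto hf_cont hg_cont hg_conv hSol hR1 hMbd hz.1 hz.2
      (fun k => ⟨(hw k).1, (hw k).2⟩) hlim'
  -- measurability and a.e. facts
  have hZmeas : ∀ i, Measurable fun ω => (U i ω, Y i ω) :=
    fun i => (hUmeas i).prodMk (hYmeas i)
  have hUset : ∀ i, MeasurableSet {ω | U i ω ∈ 𝒰} :=
    fun i => (hUmeas i) h𝒰closed.measurableSet
  have hUfull : ∀ i, P {ω | U i ω ∈ 𝒰} = 1 := by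
    intro i
    have hs : MeasurableSet (𝒰 ×ˢ (Set.univ : Set (Euc d))) :=
      h𝒰closed.measurableSet.prod MeasurableSet.univ
    have h1 : ∀ k : ℕ, {ω | U k ω ∈ 𝒰} =
        (fun ω => (U k ω, Y k ω)) ⁻¹' (𝒰 ×ˢ (Set.univ : Set (Euc d))) := by
      intro k; ext ω; simp
    rw [h1 i, ← Measure.map_apply (hZmeas i) hs, hident i,
      Measure.map_apply (hZmeas 0) hs, ← h1 0]
    exact h𝒰full
  have hae : ∀ i, ∀ᵐ ω ∂P, U i ω ∈ 𝒰 := by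
    intro i
    rw [ae_iff]
    exact (prob_compl_eq_zero_iff (hUset i)).mpr (hUfull i)
  -- pointwise identity for the Qpop integrand
  have hInt_eq : ∀ θθ ∈ Θ, ∀ ω : Ω, U 0 ω ∈ 𝒰 →
      sInf ((fun x => ‖Y 0 ω - x‖ ^ 2) '' Sol f g (U 0 ω) θθ)
        = ‖Y 0 ω - sel f g (U 0 ω) θθ‖ ^ 2 := by
    intro θθ hθ ω hω
    rw [hSol _ hω _ hθ, Set.image_singleton, csInf_singleton]
  -- dominating function
  have hDint : Integrable (fun ω => (‖Y 0 ω‖ + M) ^ 2) P := by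
    have hbd : Integrable (fun ω => 2 * ‖Y 0 ω‖ ^ 2 + 2 * M ^ 2) P :=
      (hy2.const_mul 2).add (integrable_const _)
    apply Integrable.mono' hbd
    · exact (((hYmeas 0).norm.aemeasurable.add_const M).pow_const 2).aestronglyMeasurable
    · filter_upwards with ω
      rw [Real.norm_eq_abs, abs_of_nonneg (by positivity)]
      nlinarith [norm_nonneg (Y 0 ω), sq_nonneg (‖Y 0 ω‖ - M)]
  -- Qpop via nice representatives
  have hQpop_eq : ∀ θθ ∈ Θ, ∀ Ψ : Euc m × Euc d → ℝ,
      (∀ z : Euc m × Euc d, z.1 ∈ 𝒰 → Ψ z = ‖z.2 - sel f g z.1 θθ‖ ^ 2) →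
      Qpop P f g U Y θθ = ∫ ω, Ψ (U 0 ω, Y 0 ω) ∂P := by
    intro θθ hθ Ψ hΨ
    simp only [Qpop]
    apply integral_congr_ae
    filter_upwards [hae 0] with ω hω
    rw [hInt_eq θθ hθ ω hω, hΨ (U 0 ω, Y 0 ω) hω]
  -- continuous point representatives
  have hpt : ∀ θθ ∈ Θ, ∃ Ψ : Euc m × Euc d → ℝ, Continuous Ψ ∧ (∀ z, 0 ≤ Ψ z) ∧
      (∀ z, Ψ z ≤ (‖z.2‖ + M) ^ 2) ∧
      ∀ z : Euc m × Euc d, z.1 ∈ 𝒰 → Ψ z = ‖z.2 - sel f g z.1 θθ‖ ^ 2 := by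
    intro θθ hθ
    obtain ⟨Ψ, h1, h2, h3, h4⟩ := exists_psi h𝒰closed hselC isCompact_singleton
      (Set.singleton_nonempty θθ) (by simpa using hθ) hMpos.le hselM
    exact ⟨Ψ, h1, h2, h3, fun z hz => by rw [h4 z hz, mK_singleton]⟩
  -- continuity of Qpop on Θ
  have hQC : ContinuousOn (Qpop P f g U Y) Θ := by
    apply seqContinuousOn
    intro θ hθ w hw hlim
    choose Ψw h1 h2 h3 h4 using fun k => hpt (w k) (hw k)
    obtain ⟨Ψi, g1, g2, g3, g4⟩ := hpt θ hθ
    have htendI : Tendsto (fun k => ∫ ω, Ψw k (U 0 ω, Y 0 ω) ∂P) atTop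
        (nhds (∫ ω, Ψi (U 0 ω, Y 0 ω) ∂P)) := by
      apply tendsto_integral_of_dominated_convergence (fun ω => (‖Y 0 ω‖ + M) ^ 2)
      · exact fun k => ((h1 k).measurable.comp (hZmeas 0)).aestronglyMeasurable
      · exact hDint
      · intro k; filter_upwards with ω
        rw [Real.norm_eq_abs, abs_of_nonneg (h2 k _)]
        exact h3 k _
      · filter_upwards [hae 0] with ω hω
        have hsel := sel_seq_tendsto hf_cont hg_cont hg_conv hSol hR1 hMbd hω hθ
          (w := fun k => (U 0 ω, w k)) (fun k => ⟨hω, hw k⟩)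
          (tendsto_const_nhds.prodMk_nhds hlim)
        have hval : Tendsto (fun k => ‖Y 0 ω - sel f g (U 0 ω) (w k)‖ ^ 2) atTop
            (nhds (‖Y 0 ω - sel f g (U 0 ω) θ‖ ^ 2)) :=
          ((tendsto_const_nhds.sub hsel).norm).pow 2
        rw [g4 (U 0 ω, Y 0 ω) hω]
        exact hval.congr fun k => (h4 k (U 0 ω, Y 0 ω) hω).symm
    have e2 : Qpop P f g U Y θ = ∫ ω, Ψi (U 0 ω, Y 0 ω) ∂P := hQpop_eq θ hθ Ψi g4
    rw [e2]
    exact htendI.congr fun k => (hQpop_eq (w k) (hw k) (Ψw k) (h4 k)).symm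
  
  -- begin main argument
  intro δ hδ
  have hΩne : Nonempty Ω := by
    by_contra h
    rw [not_nonempty_iff] at h
    have h1 := measure_univ (μ := P)
    rw [Set.univ_eq_empty_iff.mpr h, measure_empty] at h1
    exact zero_ne_one h1
  obtain ⟨ω₀⟩ := hΩne
  have hΘne : Θ.Nonempty := ⟨θh 0 ω₀, hθmem 0 ω₀⟩
  have hQnonneg : ∀ θθ : Euc p, 0 ≤ Qpop P f g U Y θθ := by
    intro θθ
    apply integral_nonneg
    intro ω
    simp only [Pi.zero_apply]
    rcases Set.eq_empty_or_nonempty ((fun x => ‖Y 0 ω - x‖ ^ 2) '' Sol f g (U 0 ω) θθ)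
      with h | h
    · rw [h, Real.sInf_empty]
    · exact le_csInf h (fun b ⟨x, _, hx⟩ => hx ▸ by positivity)
  set c := sInf (Qpop P f g U Y '' Θ) with hc
  have hbdd : BddBelow (Qpop P f g U Y '' Θ) := ⟨0, fun r ⟨θθ, _, h⟩ => h ▸ hQnonneg θθ⟩
  have hcle : ∀ θθ ∈ Θ, c ≤ Qpop P f g U Y θθ := fun θθ h => csInf_le hbdd ⟨θθ, h, rfl⟩
  obtain ⟨qs, ⟨θs, hθsΘ, hθsq⟩, hqs⟩ := exists_lt_of_csInf_lt (hΘne.image _)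
    (show c < c + δ/8 by linarith)
  have hθs : Qpop P f g U Y θs < c + δ/8 := by rw [hθsq]; exact hqs
  -- uniform continuity radius
  obtain ⟨ρ₁, hρ₁pos, hρ₁⟩ := Metric.uniformContinuousOn_iff.mp
    (hΘcpt.uniformContinuousOn_of_continuous hQC) (δ/8) (by linarith)
  -- point representative at θs
  obtain ⟨Ψs, hΨsC, hΨs0, hΨsbd, hΨseq⟩ := hpt θs hθsΘ
  have hIs : Qpop P f g U Y θs = ∫ ω, Ψs (U 0 ω, Y 0 ω) ∂P := hQpop_eq θs hθsΘ Ψs hΨseq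
  -- Wald cover functions
  have hcover : ∀ θ₀ : Euc p, ∃ r : ℝ, 0 < r ∧ ∃ Ψ : Euc m × Euc d → ℝ, θ₀ ∈ Θ →
      (r ≤ ρ₁/2 ∧ Measurable Ψ ∧ (∀ z, 0 ≤ Ψ z) ∧ (∀ z, Ψ z ≤ (‖z.2‖ + M) ^ 2) ∧
      (∀ u ∈ 𝒰, ∀ y : Euc d, ∀ θ' ∈ Θ, dist θ' θ₀ ≤ r → Ψ (u, y) ≤ ‖y - sel f g u θ'‖ ^ 2) ∧
      Qpop P f g U Y θ₀ - δ/8 ≤ ∫ ω, Ψ (U 0 ω, Y 0 ω) ∂P) := by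
    intro θ₀
    by_cases hθ₀ : θ₀ ∈ Θ
    swap
    · exact ⟨1, one_pos, 0, fun h => absurd h hθ₀⟩
    set K : ℕ → Set (Euc p) := fun j => Metric.closedBall θ₀ (1/(j+1)) ∩ Θ with hK
    have hKcpt : ∀ j : ℕ, IsCompact (K j) := fun j => hΘcpt.inter_left isClosed_closedBall
    have hKne : ∀ j : ℕ, (K j).Nonempty :=
      fun j => ⟨θ₀, Metric.mem_closedBall_self (by positivity), hθ₀⟩
    have hKsub : ∀ j : ℕ, K j ⊆ Θ := fun j => Set.inter_subset_right
    have hΨj : ∀ j : ℕ, ∃ Ψ : Euc m × Euc d → ℝ, Continuous Ψ ∧ (∀ z, 0 ≤ Ψ z) ∧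
        (∀ z, Ψ z ≤ (‖z.2‖ + M) ^ 2) ∧
        (∀ z : Euc m × Euc d, z.1 ∈ 𝒰 → Ψ z = mK f g (K j) z) :=
      fun j => exists_psi h𝒰closed hselC (hKcpt j) (hKne j) (hKsub j) hMpos.le hselM
    choose Ψj hjC hj0 hjbd hjeq using hΨj
    have htend : Tendsto (fun j => ∫ ω, Ψj j (U 0 ω, Y 0 ω) ∂P) atTop
        (nhds (Qpop P f g U Y θ₀)) := by
      simp only [Qpop]
      apply tendsto_integral_of_dominated_convergence (fun ω => (‖Y 0 ω‖ + M) ^ 2)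
      · exact fun j => ((hjC j).measurable.comp (hZmeas 0)).aestronglyMeasurable
      · exact hDint
      · intro j; filter_upwards with ω
        rw [Real.norm_eq_abs, abs_of_nonneg (hj0 j _)]
        exact hjbd j _
      · filter_upwards [hae 0] with ω hω
        rw [hInt_eq θ₀ hθ₀ ω hω]
        have hatt : ∀ j : ℕ, ∃ θA ∈ K j,
            mK f g (K j) (U 0 ω, Y 0 ω) = ‖Y 0 ω - sel f g (U 0 ω) θA‖ ^ 2 :=
          fun j => mK_attained hselC (hKcpt j) (hKne j) (hKsub j) hω _
        choose θA hθAK hθAv using hatt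
        have hθAtend : Tendsto θA atTop (nhds θ₀) := by
          rw [tendsto_iff_dist_tendsto_zero]
          have hb : ∀ j : ℕ, dist (θA j) θ₀ ≤ 1/((j:ℝ)+1) :=
            fun j => Metric.mem_closedBall.mp (hθAK j).1
          exact squeeze_zero (fun j => dist_nonneg) hb tendsto_one_div_add_atTop_nhds_zero_nat
        have hseltend := sel_seq_tendsto hf_cont hg_cont hg_conv hSol hR1 hMbd hω hθ₀
          (w := fun j => (U 0 ω, θA j)) (fun j => ⟨hω, hKsub j (hθAK j)⟩)
          (tendsto_const_nhds.prodMk_nhds hθAtend)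
        have hval : Tendsto (fun j => ‖Y 0 ω - sel f g (U 0 ω) (θA j)‖ ^ 2) atTop
            (nhds (‖Y 0 ω - sel f g (U 0 ω) θ₀‖ ^ 2)) :=
          ((tendsto_const_nhds.sub hseltend).norm).pow 2
        exact hval.congr fun j => by rw [← hθAv j, ← hjeq j _ hω]
    have hev1 := Metric.tendsto_nhds.mp htend (δ/8) (by linarith)
    have hev2 : ∀ᶠ j : ℕ in atTop, (1:ℝ)/(j+1) ≤ ρ₁/2 := by
      filter_upwards [Metric.tendsto_nhds.mp (tendsto_one_div_add_atTop_nhds_zero_nat (𝕜 := ℝ))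
        (ρ₁/2) (by linarith)] with j hj
      rw [Real.dist_eq, sub_zero] at hj
      exact (lt_of_abs_lt hj).le
    obtain ⟨j, hj1, hj2⟩ := (hev1.and hev2).exists
    refine ⟨1/(j+1), by positivity, Ψj j, fun _ => ⟨hj2, (hjC j).measurable, hj0 j, hjbd j,
      ?_, ?_⟩⟩
    · intro u hu y θ' hθ' hdist
      rw [hjeq j (u, y) hu]
      exact mK_le ⟨Metric.mem_closedBall.mpr hdist, hθ'⟩
    · rw [Real.dist_eq] at hj1
      have := abs_lt.mp hj1
      linarith [this.1]
  choose rr hrpos Ψc hcov2 using hcover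
  -- finite subcover
  have hcov : Θ ⊆ ⋃ θ₀ ∈ Θ, Metric.ball θ₀ (rr θ₀) :=
    fun θθ hθ => Set.mem_biUnion hθ (Metric.mem_ball_self (hrpos θθ))
  obtain ⟨t0, ht0Θ, ht0fin, ht0cov⟩ :=
    hΘcpt.elim_finite_subcover_image (fun θ₀ _ => Metric.isOpen_ball) hcov
  
  set T : Finset (Euc p) := ht0fin.toFinset with hT
  have hTmem : ∀ θ₀ : Euc p, θ₀ ∈ T ↔ θ₀ ∈ t0 := fun _ => ht0fin.mem_toFinset
  -- events
  set As : ℕ → Set Ω := fun n => {ω | δ/8 ≤ |(n:ℝ)⁻¹ * ∑ i ∈ Finset.range n,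
    Ψs (U i ω, Y i ω) - ∫ ω', Ψs (U 0 ω', Y 0 ω') ∂P|} with hAsdef
  set Bs : Euc p → ℕ → Set Ω := fun θ₀ n => {ω | δ/8 ≤ |(n:ℝ)⁻¹ * ∑ i ∈ Finset.range n,
    Ψc θ₀ (U i ω, Y i ω) - ∫ ω', Ψc θ₀ (U 0 ω', Y 0 ω') ∂P|} with hBsdef
  set Ns : ℕ → Set Ω := fun n => {ω | ¬ ∀ i, i < n → U i ω ∈ 𝒰} with hNsdef
  set Ds : ℕ → Set Ω := fun n => {ω | Metric.infDist (θh n ω)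
    {θ ∈ Θ | ∀ θ' ∈ Θ, Qnw f g U Y n ω θ ≤ Qnw f g U Y n ω θ'} > ρ₁/4} with hDsdef
  have hAs : Tendsto (fun n => P (As n)) atTop (nhds 0) :=
    lln_prob U Y hUmeas hYmeas hindep hident hy2 Ψs hΨsC.measurable hΨs0 hΨsbd
      (by linarith : (0:ℝ) < δ/8)
  have hBs : ∀ θ₀ ∈ T, Tendsto (fun n => P (Bs θ₀ n)) atTop (nhds 0) := by
    intro θ₀ hθ₀T
    obtain ⟨-, hΨm, hΨ0, hΨbd2, -, -⟩ := hcov2 θ₀ (ht0Θ ((hTmem θ₀).mp hθ₀T))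
    exact lln_prob U Y hUmeas hYmeas hindep hident hy2 (Ψc θ₀) hΨm hΨ0 hΨbd2
      (by linarith : (0:ℝ) < δ/8)
  have hNs : ∀ n, P (Ns n) = 0 := by
    intro n
    apply measure_mono_null (t := ⋃ i : ℕ, {ω | U i ω ∉ 𝒰})
    · intro ω hω
      simp only [hNsdef, Set.mem_setOf_eq, not_forall] at hω
      obtain ⟨i, _, hi⟩ := hω
      exact Set.mem_iUnion.mpr ⟨i, hi⟩
    · apply measure_iUnion_null
      intro i
      have : {ω | U i ω ∉ 𝒰} = {ω | U i ω ∈ 𝒰}ᶜ := rfl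
      rw [this]
      exact (prob_compl_eq_zero_iff (hUset i)).mpr (hUfull i)
  have hDs : Tendsto (fun n => P (Ds n)) atTop (nhds 0) := hnearopt (ρ₁/4) (by linarith)
  -- key inclusion
  have hincl : ∀ n : ℕ, {ω | |Qpop P f g U Y (θh n ω) - c| > δ} ⊆
      Ns n ∪ (As n ∪ ((⋃ θ₀ ∈ T, Bs θ₀ n) ∪ Ds n)) := by
    intro n ω hmem
    rw [Set.mem_setOf_eq] at hmem
    by_contra hbad
    simp only [Set.mem_union, not_or] at hbad
    obtain ⟨hb1, hb2, hb3, hb4⟩ := hbad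
    have hgood : ∀ i, i < n → U i ω ∈ 𝒰 := by
      have : ¬ (¬ ∀ i, i < n → U i ω ∈ 𝒰) := hb1
      exact not_not.mp this
    have hA' : |(n:ℝ)⁻¹ * ∑ i ∈ Finset.range n, Ψs (U i ω, Y i ω) -
        ∫ ω', Ψs (U 0 ω', Y 0 ω') ∂P| < δ/8 := not_le.mp hb2
    have hB' : ∀ θ₀ ∈ T, |(n:ℝ)⁻¹ * ∑ i ∈ Finset.range n, Ψc θ₀ (U i ω, Y i ω) -
        ∫ ω', Ψc θ₀ (U 0 ω', Y 0 ω') ∂P| < δ/8 := by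
      intro θ₀ hθ₀T
      simp only [Set.mem_iUnion, not_exists] at hb3
      exact not_le.mp (hb3 θ₀ hθ₀T)
    have hD' : Metric.infDist (θh n ω)
        {θ ∈ Θ | ∀ θ' ∈ Θ, Qnw f g U Y n ω θ ≤ Qnw f g U Y n ω θ'} ≤ ρ₁/4 :=
      not_lt.mp hb4
    -- Qnw formula on good ω
    have hQnw_eq : ∀ θ' ∈ Θ, Qnw f g U Y n ω θ' =
        (1/n : ℝ) * ∑ i : Fin n, ‖Y i.val ω - sel f g (U i.val ω) θ'‖ ^ 2 := by
      intro θ' hθ'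
      have hset : {x : Fin n → Euc d | ∀ i : Fin n, x i ∈ Sol f g (U i.val ω) θ'}
          = {fun i : Fin n => sel f g (U i.val ω) θ'} := by
        ext x
        simp only [Set.mem_setOf_eq, Set.mem_singleton_iff]
        constructor
        · intro hx; funext i
          have := hx i
          rw [hSol _ (hgood i.val i.isLt) _ hθ'] at this
          exact this
        · intro hx i
          rw [hx]
          exact hselSol _ (hgood i.val i.isLt) _ hθ'
      rw [Qnw, hset, Set.image_singleton, csInf_singleton]
    have hQnwC : ContinuousOn (Qnw f g U Y n ω) Θ := by
      have hform : ContinuousOn (fun θ' : Euc p =>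
          (1/n : ℝ) * ∑ i : Fin n, ‖Y i.val ω - sel f g (U i.val ω) θ'‖ ^ 2) Θ := by
        apply ContinuousOn.mul continuousOn_const
        apply continuousOn_finset_sum
        intro i _
        exact fiber_contOn hselC (hgood i.val i.isLt) (Y i.val ω)
      exact hform.congr hQnw_eq
    have hArgNe : {θ ∈ Θ | ∀ θ' ∈ Θ, Qnw f g U Y n ω θ ≤ Qnw f g U Y n ω θ'}.Nonempty := by
      obtain ⟨θm, hθmΘ2, hmin⟩ := hΘcpt.exists_isMinOn hΘne hQnwC
      exact ⟨θm, hθmΘ2, fun θ' h => hmin h⟩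
    have hidlt : Metric.infDist (θh n ω)
        {θ ∈ Θ | ∀ θ' ∈ Θ, Qnw f g U Y n ω θ ≤ Qnw f g U Y n ω θ'} < ρ₁/2 :=
      lt_of_le_of_lt hD' (by linarith)
    obtain ⟨θt, hθtArg, hθtd⟩ := (Metric.infDist_lt_iff hArgNe).mp hidlt
    have hθtΘ : θt ∈ Θ := hθtArg.1
    -- covering ball
    have hmem2 := ht0cov hθtΘ
    rw [Set.mem_iUnion₂] at hmem2
    obtain ⟨θ₀, hθ₀t0, hθ₀ball⟩ := hmem2
    have hθ₀Θ : θ₀ ∈ Θ := ht0Θ hθ₀t0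
    obtain ⟨hr2, hΨm, hΨ0, hΨbd2, hΨle, hΨint2⟩ := hcov2 θ₀ hθ₀Θ
    -- (a) Qpop θh close to Qpop θt
    have ha : |Qpop P f g U Y (θh n ω) - Qpop P f g U Y θt| < δ/8 := by
      have hdist : dist (θh n ω) θt < ρ₁ := lt_trans hθtd (by linarith)
      have := hρ₁ (θh n ω) (hθmem n ω) θt hθtΘ hdist
      rw [Real.dist_eq] at this
      exact this
    -- (b) Qpop θt close to Qpop θ₀
    have hb : |Qpop P f g U Y θt - Qpop P f g U Y θ₀| < δ/8 := by
      have hdist : dist θt θ₀ < ρ₁ :=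
        lt_of_lt_of_le (Metric.mem_ball.mp hθ₀ball) (le_trans hr2 (by linarith))
      have := hρ₁ θt hθtΘ θ₀ hθ₀Θ hdist
      rw [Real.dist_eq] at this
      exact this
    -- (e) average of Ψc bounded by Qnw at θt
    have he : (n:ℝ)⁻¹ * ∑ i ∈ Finset.range n, Ψc θ₀ (U i ω, Y i ω) ≤
        Qnw f g U Y n ω θt := by
      rw [hQnw_eq θt hθtΘ, one_div]
      apply mul_le_mul_of_nonneg_left _ (by positivity)
      rw [← Fin.sum_univ_eq_sum_range (fun i => Ψc θ₀ (U i ω, Y i ω)) n]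
      apply Finset.sum_le_sum
      intro i _
      exact hΨle _ (hgood i.val i.isLt) _ _ hθtΘ (le_of_lt (Metric.mem_ball.mp hθ₀ball))
    -- (f) optimality of θt
    have hf2 : Qnw f g U Y n ω θt ≤ Qnw f g U Y n ω θs := hθtArg.2 θs hθsΘ
    -- (g) Qnw at θs equals average of Ψs
    have hg2 : Qnw f g U Y n ω θs =
        (n:ℝ)⁻¹ * ∑ i ∈ Finset.range n, Ψs (U i ω, Y i ω) := by
      rw [hQnw_eq θs hθsΘ, one_div,
        ← Fin.sum_univ_eq_sum_range (fun i => Ψs (U i ω, Y i ω)) n]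
      congr 1
      apply Finset.sum_congr rfl
      intro i _
      rw [hΨseq (U i.val ω, Y i.val ω) (hgood i.val i.isLt)]
    have k2 := hB' θ₀ ((hTmem θ₀).mpr hθ₀t0)
    have hIs' : ∫ ω', Ψs (U 0 ω', Y 0 ω') ∂P < c + δ/8 := by rw [← hIs]; exact hθs
    have l1 := abs_lt.mp ha
    have l2 := abs_lt.mp hb
    have l3 := abs_lt.mp k2
    have l4 := abs_lt.mp hA'
    have hfinal : Qpop P f g U Y (θh n ω) < c + δ := by
      linarith [l1.2, l2.2, hΨint2, l3.1, he, hf2, hg2.le, hg2.ge, l4.2, hIs', hδ]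
    have hlow : c ≤ Qpop P f g U Y (θh n ω) := hcle _ (hθmem n ω)
    have habs2 : |Qpop P f g U Y (θh n ω) - c| ≤ δ :=
      abs_le.mpr ⟨by linarith, by linarith⟩
    exact absurd hmem (not_lt.mpr habs2)
  -- final squeeze
  have hle : ∀ n : ℕ, P {ω | |Qpop P f g U Y (θh n ω) - c| > δ} ≤
      P (As n) + ((∑ θ₀ ∈ T, P (Bs θ₀ n)) + P (Ds n)) := by
    intro n
    calc P {ω | |Qpop P f g U Y (θh n ω) - c| > δ}
        ≤ P (Ns n ∪ (As n ∪ ((⋃ θ₀ ∈ T, Bs θ₀ n) ∪ Ds n))) := measure_mono (hincl n)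
      _ ≤ P (Ns n) + P (As n ∪ ((⋃ θ₀ ∈ T, Bs θ₀ n) ∪ Ds n)) := measure_union_le _ _
      _ = P (As n ∪ ((⋃ θ₀ ∈ T, Bs θ₀ n) ∪ Ds n)) := by rw [hNs n, zero_add]
      _ ≤ P (As n) + P ((⋃ θ₀ ∈ T, Bs θ₀ n) ∪ Ds n) := measure_union_le _ _
      _ ≤ P (As n) + (P (⋃ θ₀ ∈ T, Bs θ₀ n) + P (Ds n)) := by
          exact add_le_add_right (measure_union_le _ _) _
      _ ≤ P (As n) + ((∑ θ₀ ∈ T, P (Bs θ₀ n)) + P (Ds n)) := by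
          exact add_le_add_right (add_le_add_left (measure_biUnion_finset_le T _) _) _
  have hR : Tendsto (fun n => P (As n) + ((∑ θ₀ ∈ T, P (Bs θ₀ n)) + P (Ds n)))
      atTop (nhds 0) := by
    have hsum : Tendsto (fun n => ∑ θ₀ ∈ T, P (Bs θ₀ n)) atTop
        (nhds (∑ _θ₀ ∈ T, (0 : ENNReal))) :=
      tendsto_finset_sum T (fun θ₀ h => hBs θ₀ h)
    rw [Finset.sum_const, smul_zero] at hsum
    have := hAs.add (hsum.add hDs)
    simpa using this
  exact tendsto_of_tendsto_of_tendsto_of_le_of_le tendsto_const_nhds hR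
    (fun n => by positivity) hle
end
end

section
/- Suppose Assumptions A1, A2 and R1 hold, f and g are jointly continuous, f(·,u,θ) is strictly convex on ℝ^d for each (u,θ) ∈ 𝒰 × Θ, Θ is compact, and fix data (u_i, y_i) with u_i ∈ 𝒰. Then for every d > 0 there exists Δ > 0 such that: for every δ with 0 < δ ≤ Δ, every finite δ-net 𝒯(δ) ⊆ Θ of Θ, and every θ̂ ∈ argmin{ Q_n(θ) : θ ∈ 𝒯(δ) }, one has dist(θ̂, argmin{ Q_n(θ) : θ ∈ Θ }) < d. -/
open Set Metric Filter MeasureTheory ProbabilityTheory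
open Topology

noncomputable section

-- Feasible set is convex
lemma feas_convex {d m p q : ℕ} (g : Euc d → Euc m → Euc p → Fin q → ℝ)
    (uu : Euc m) (θθ : Euc p)
    (hg_conv : ∀ j, ConvexOn ℝ Set.univ fun x => g x uu θθ j) :
    Convex ℝ (Feas g uu θθ) := by
  intro x hx y hy a b ha hb hab
  intro j
  have h1 := (hg_conv j).2 (Set.mem_univ x) (Set.mem_univ y) ha hb hab
  simp only [smul_eq_mul] at h1
  have hx' : g x uu θθ j ≤ 0 := hx j
  have hy' : g y uu θθ j ≤ 0 := hy j
  nlinarith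

-- Sol is a singleton
lemma sol_singleton {d m p q : ℕ} (f : Euc d → Euc m → Euc p → ℝ)
    (g : Euc d → Euc m → Euc p → Fin q → ℝ) (uu : Euc m) (θθ : Euc p)
    (hf_cont : Continuous fun x => f x uu θθ)
    (hg_conv : ∀ j, ConvexOn ℝ Set.univ fun x => g x uu θθ j)
    (hstrict : StrictConvexOn ℝ Set.univ fun x => f x uu θθ)
    (hcpt : IsCompact (Feas g uu θθ)) (hne : (Feas g uu θθ).Nonempty) :
    ∃ s, Sol f g uu θθ = {s} := by
  obtain ⟨x0, hx0, hx0min⟩ := hcpt.exists_isMinOn hne hf_cont.continuousOn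
  refine ⟨x0, ?_⟩
  have hx0sol : x0 ∈ Sol f g uu θθ := ⟨hx0, fun x' hx' => hx0min hx'⟩
  apply Set.eq_singleton_iff_unique_mem.2
  refine ⟨hx0sol, fun x1 hx1 => ?_⟩
  by_contra hne1
  have hf1 : f x1 uu θθ = f x0 uu θθ :=
    le_antisymm (hx1.2 x0 hx0) (hx0sol.2 x1 hx1.1)
  have hz : ((1/2 : ℝ) • x1 + (1/2 : ℝ) • x0) ∈ Feas g uu θθ :=
    feas_convex g uu θθ hg_conv hx1.1 hx0 (by norm_num) (by norm_num) (by norm_num)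
  have hs := hstrict.2 (Set.mem_univ x1) (Set.mem_univ x0) hne1
    (by norm_num : (0:ℝ) < 1/2) (by norm_num : (0:ℝ) < 1/2) (by norm_num)
  simp only [smul_eq_mul] at hs
  have hle := hx1.2 _ hz
  rw [hf1] at hs
  linarith

-- cluster point of solutions is a solution
lemma cluster_mem_sol {d m p q : ℕ} (f : Euc d → Euc m → Euc p → ℝ)
    (g : Euc d → Euc m → Euc p → Fin q → ℝ) (uu : Euc m)
    (hf_cont : Continuous fun t : Euc d × Euc m × Euc p => f t.1 t.2.1 t.2.2)
    (hg_cont : ∀ j, Continuous fun t : Euc d × Euc m × Euc p => g t.1 t.2.1 t.2.2 j)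
    (θ : Euc p)
    (hg_conv : ∀ j, ConvexOn ℝ Set.univ fun x => g x uu θ j)
    (xb : Euc d) (hxbS : ∀ j, g xb uu θ j < 0)
    (θs : ℕ → Euc p) (hθs : Tendsto θs atTop (𝓝 θ))
    (xs : ℕ → Euc d) (hxs : ∀ k, xs k ∈ Sol f g uu (θs k))
    (xh : Euc d) (hxx : Tendsto xs atTop (𝓝 xh)) :
    xh ∈ Sol f g uu θ := by
  have htend : Tendsto (fun k => (xs k, uu, θs k)) atTop (𝓝 (xh, uu, θ)) :=
    hxx.prodMk_nhds (tendsto_const_nhds.prodMk_nhds hθs)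
  constructor
  · -- feasibility
    intro j
    have h1 : Tendsto (fun k => g (xs k) uu (θs k) j) atTop (𝓝 (g xh uu θ j)) :=
      ((hg_cont j).tendsto _).comp htend
    exact le_of_tendsto h1 (Filter.Eventually.of_forall fun k => (hxs k).1 j)
  · -- optimality
    intro x' hx'
    have key : ∀ t : ℝ, 0 < t → t ≤ 1 →
        f xh uu θ ≤ f ((1-t) • x' + t • xb) uu θ := by
      intro t ht ht1
      set z : Euc d := (1-t) • x' + t • xb with hz
      have hz_neg : ∀ j, g z uu θ j < 0 := by
        intro j
        have h1 := (hg_conv j).2 (Set.mem_univ x') (Set.mem_univ xb)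
          (by linarith : (0:ℝ) ≤ 1 - t) ht.le (by ring)
        simp only [smul_eq_mul] at h1
        have h2 : g x' uu θ j ≤ 0 := hx' j
        have h3 : g xb uu θ j < 0 := hxbS j
        nlinarith
      have hev : ∀ᶠ k in atTop, ∀ j, g z uu (θs k) j ≤ 0 := by
        rw [eventually_all]
        intro j
        have h1 : Tendsto (fun k => g z uu (θs k) j) atTop (𝓝 (g z uu θ j)) :=
          ((hg_cont j).tendsto _).comp
            (tendsto_const_nhds.prodMk_nhds (tendsto_const_nhds.prodMk_nhds hθs))
        exact (h1.eventually_lt_const (hz_neg j)).mono fun k hk => hk.le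
      have hle : ∀ᶠ k in atTop, f (xs k) uu (θs k) ≤ f z uu (θs k) :=
        hev.mono fun k hk => (hxs k).2 z hk
      have t1 : Tendsto (fun k => f (xs k) uu (θs k)) atTop (𝓝 (f xh uu θ)) :=
        (hf_cont.tendsto _).comp htend
      have t2 : Tendsto (fun k => f z uu (θs k)) atTop (𝓝 (f z uu θ)) :=
        (hf_cont.tendsto _).comp
          (tendsto_const_nhds.prodMk_nhds (tendsto_const_nhds.prodMk_nhds hθs))
      exact le_of_tendsto_of_tendsto t1 t2 hle
    -- let t → 0
    have hzt : Tendsto (fun k : ℕ => (1 - 1/(k+1) : ℝ) • x' + (1/(k+1) : ℝ) • xb)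
        atTop (𝓝 x') := by
      have h0 : Tendsto (fun k : ℕ => (1/(k+1) : ℝ)) atTop (𝓝 0) :=
        tendsto_one_div_add_atTop_nhds_zero_nat
      have h1 : Tendsto (fun k : ℕ => (1 - 1/(k+1) : ℝ) • x' + (1/(k+1) : ℝ) • xb)
          atTop (𝓝 ((1 - (0:ℝ)) • x' + (0:ℝ) • xb)) :=
        (((tendsto_const_nhds : Tendsto (fun _ : ℕ => (1:ℝ)) atTop (𝓝 1)).sub h0).smul
          (tendsto_const_nhds : Tendsto (fun _ : ℕ => x') atTop (𝓝 x'))).add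
          (h0.smul (tendsto_const_nhds : Tendsto (fun _ : ℕ => xb) atTop (𝓝 xb)))
      simpa using h1
    have hft : Tendsto (fun k : ℕ => f ((1 - 1/(k+1) : ℝ) • x' + (1/(k+1) : ℝ) • xb) uu θ)
        atTop (𝓝 (f x' uu θ)) :=
      (hf_cont.tendsto _).comp
        (hzt.prodMk_nhds (tendsto_const_nhds.prodMk_nhds tendsto_const_nhds))
    refine ge_of_tendsto hft (Filter.Eventually.of_forall fun k => ?_)
    refine key (1/(k+1)) (by positivity) ?_
    rw [div_le_one (by positivity)]
    linarith [(Nat.cast_nonneg k : (0:ℝ) ≤ k)]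

/-- Theorem 8 (correctness of the enumeration algorithm with `ε = 0` in the strictly
convex case): under A1, A2, R1 (with joint continuity, strict convexity of
`f(·,u,θ)` on `𝒰 × Θ`, and compact `Θ`), for every `d > 0` there exists `Δ > 0`
such that for every `0 < δ ≤ Δ`, every finite `δ`-net `𝒯 ⊆ Θ` of `Θ`, and every
minimizer `θ̂` of `Q_n` over `𝒯`, the point `θ̂` is within distance `d` of the
argmin set of `Q_n` over `Θ`. -/
theorem statement13 {d m p q : ℕ} (n : ℕ)
    (f : Euc d → Euc m → Euc p → ℝ) (g : Euc d → Euc m → Euc p → Fin q → ℝ)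
    (𝒰 : Set (Euc m)) (Θ : Set (Euc p))
    (hf_cont : Continuous fun t : Euc d × Euc m × Euc p => f t.1 t.2.1 t.2.2)
    (hg_cont : ∀ j, Continuous fun t : Euc d × Euc m × Euc p => g t.1 t.2.1 t.2.2 j)
    (hf_conv : ∀ (uu : Euc m) (θθ : Euc p), ConvexOn ℝ Set.univ fun x => f x uu θθ)
    (hg_conv : ∀ (uu : Euc m) (θθ : Euc p) (j : Fin q),
      ConvexOn ℝ Set.univ fun x => g x uu θθ j)
    (hf_strict : ∀ uu ∈ 𝒰, ∀ θθ ∈ Θ, StrictConvexOn ℝ Set.univ fun x => f x uu θθ)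
    (hΘ : Convex ℝ Θ) (hΘcpt : IsCompact Θ)
    (hR1 : ∀ uu ∈ 𝒰, ∀ θθ ∈ Θ, IsCompact (Feas g uu θθ) ∧
      ∃ xb ∈ Feas g uu θθ, ∀ j, g xb uu θθ j < 0)
    (hR1bd : ∃ M > 0, ∀ uu ∈ 𝒰, ∀ θθ ∈ Θ, ∀ x ∈ Feas g uu θθ, ‖x‖ ≤ M)
    (u : Fin n → Euc m) (y : Fin n → Euc d) (hu : ∀ i, u i ∈ 𝒰) :
    ∀ dd > (0 : ℝ), ∃ Δ > (0 : ℝ),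
      ∀ δ, 0 < δ → δ ≤ Δ →
        ∀ 𝒯 : Finset (Euc p), ↑𝒯 ⊆ Θ → (∀ θ ∈ Θ, ∃ t ∈ 𝒯, ‖t - θ‖ ≤ δ) →
          ∀ θh ∈ 𝒯, (∀ t ∈ 𝒯, Qn f g n u y θh ≤ Qn f g n u y t) →
            Metric.infDist θh
              {θ ∈ Θ | ∀ θ' ∈ Θ, Qn f g n u y θ ≤ Qn f g n u y θ'} < dd := by
  classical
  intro dd hdd
  rcases Set.eq_empty_or_nonempty Θ with hΘe | hΘne
  · exact ⟨1, one_pos, fun δ _ _ 𝒯 h𝒯sub _ θh hθh _ =>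
      absurd (h𝒯sub hθh) (by simp [hΘe])⟩
  obtain ⟨M, hM0, hMbd⟩ := hR1bd
  -- solution sets are singletons
  have hsol : ∀ (i : Fin n), ∀ θ ∈ Θ, ∃ s, Sol f g (u i) θ = {s} := by
    intro i θ hθ
    obtain ⟨hcpt, xb, hxbF, hxbS⟩ := hR1 (u i) (hu i) θ hθ
    exact sol_singleton f g (u i) θ
      (by simpa [Function.comp_def] using
        hf_cont.comp ((continuous_id (X := Euc d)).prodMk
          (continuous_const (y := ((u i), θ)))))
      (fun j => hg_conv (u i) θ j) (hf_strict (u i) (hu i) θ hθ) hcpt ⟨xb, hxbF⟩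
  -- a selection of the unique solution
  obtain ⟨xsel, hxsel⟩ : ∃ xsel : Fin n → Euc p → Euc d,
      ∀ i, ∀ θ ∈ Θ, xsel i θ ∈ Sol f g (u i) θ := by
    refine ⟨fun i θ => if h : (Sol f g (u i) θ).Nonempty then h.choose else 0, ?_⟩
    intro i θ hθ
    obtain ⟨s, hsθ⟩ := hsol i θ hθ
    have hne : (Sol f g (u i) θ).Nonempty := ⟨s, by rw [hsθ]; rfl⟩
    simp only [dif_pos hne]
    exact hne.choose_spec
  have hsing : ∀ i, ∀ θ ∈ Θ, Sol f g (u i) θ = {xsel i θ} := by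
    intro i θ hθ
    obtain ⟨s, hsθ⟩ := hsol i θ hθ
    have hmem := hxsel i θ hθ
    rw [hsθ, Set.mem_singleton_iff] at hmem
    rw [hsθ, hmem]
  -- value formula for Qn
  have hQ : ∀ θ ∈ Θ, Qn f g n u y θ = (1/n : ℝ) * ∑ i, ‖y i - xsel i θ‖ ^ 2 := by
    intro θ hθ
    have hset : {x : Fin n → Euc d | ∀ i, x i ∈ Sol f g (u i) θ}
        = {fun i => xsel i θ} := by
      ext x
      simp only [Set.mem_setOf_eq, Set.mem_singleton_iff]
      constructor
      · intro h
        funext i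
        have hi := h i
        rw [hsing i θ hθ, Set.mem_singleton_iff] at hi
        exact hi
      · intro h i
        rw [h, hsing i θ hθ]
        rfl
    rw [Qn, hset, Set.image_singleton, csInf_singleton]
  -- sequential continuity of the selection on Θ
  have hxc : ∀ (i : Fin n), ∀ θ ∈ Θ, ∀ θs : ℕ → Euc p, (∀ k, θs k ∈ Θ) →
      Tendsto θs atTop (𝓝 θ) →
      Tendsto (fun k => xsel i (θs k)) atTop (𝓝 (xsel i θ)) := by
    intro i θ hθ θs hθsΘ hθs
    apply tendsto_of_subseq_tendsto
    intro ns hns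
    have hmem : ∀ k, xsel i (θs (ns k)) ∈ Metric.closedBall (0 : Euc d) M := by
      intro k
      rw [mem_closedBall_zero_iff]
      exact hMbd (u i) (hu i) (θs (ns k)) (hθsΘ (ns k)) _ (hxsel i _ (hθsΘ (ns k))).1
    obtain ⟨a, _, φ, hφ, hconv⟩ :=
      (isCompact_closedBall (0 : Euc d) M).tendsto_subseq hmem
    obtain ⟨hcpt, xb, hxbF, hxbS⟩ := hR1 (u i) (hu i) θ hθ
    have ha : a ∈ Sol f g (u i) θ :=
      cluster_mem_sol f g (u i) hf_cont hg_cont θ (fun j => hg_conv (u i) θ j)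
        xb hxbS (fun k => θs (ns (φ k))) (hθs.comp (hns.comp hφ.tendsto_atTop))
        (fun k => xsel i (θs (ns (φ k)))) (fun k => hxsel i _ (hθsΘ _)) a hconv
    rw [hsing i θ hθ, Set.mem_singleton_iff] at ha
    exact ⟨φ, ha ▸ hconv⟩
  -- continuity of Qn on Θ
  have hQcont : ContinuousOn (Qn f g n u y) Θ := by
    intro θ hθ
    rw [ContinuousWithinAt, tendsto_iff_seq_tendsto]
    intro θs hθs
    rw [tendsto_nhdsWithin_iff] at hθs
    obtain ⟨hlim, hev⟩ := hθs
    obtain ⟨N, hN⟩ := eventually_atTop.1 hev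
    rw [← tendsto_add_atTop_iff_nat N]
    have hmemΘ : ∀ k, θs (k + N) ∈ Θ := fun k => hN _ (Nat.le_add_left N k)
    have hlim' : Tendsto (fun k => θs (k + N)) atTop (𝓝 θ) :=
      hlim.comp (tendsto_add_atTop_nat N)
    have hval : Tendsto (fun k => (1/n : ℝ) * ∑ i, ‖y i - xsel i (θs (k+N))‖ ^ 2)
        atTop (𝓝 ((1/n : ℝ) * ∑ i, ‖y i - xsel i θ‖ ^ 2)) := by
      apply Tendsto.const_mul
      apply tendsto_finset_sum
      intro i _
      exact ((tendsto_const_nhds.sub (hxc i θ hθ _ hmemΘ hlim')).norm).pow 2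
    rw [hQ θ hθ]
    exact hval.congr fun k => (hQ _ (hmemΘ k)).symm
  -- argmin set
  set A := {θ ∈ Θ | ∀ θ' ∈ Θ, Qn f g n u y θ ≤ Qn f g n u y θ'} with hA
  obtain ⟨θstar, hθstarΘ, hθstarmin⟩ := hΘcpt.exists_isMinOn hΘne hQcont
  have hθstarA : θstar ∈ A := ⟨hθstarΘ, fun θ' hθ' => isMinOn_iff.1 hθstarmin θ' hθ'⟩
  set V := Θ ∩ {θ | dd ≤ Metric.infDist θ A} with hV
  have hVcpt : IsCompact V :=
    hΘcpt.inter_right (isClosed_le continuous_const (continuous_infDist_pt A))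
  rcases Set.eq_empty_or_nonempty V with hVe | hVne
  · refine ⟨1, one_pos, ?_⟩
    intro δ hδ hδΔ 𝒯 h𝒯sub hnet θh hθh hmin
    by_contra hcon
    have : θh ∈ V := ⟨h𝒯sub hθh, not_lt.1 hcon⟩
    rw [hVe] at this
    exact this
  obtain ⟨θV, hθVV, hθVmin⟩ :=
    hVcpt.exists_isMinOn hVne (hQcont.mono Set.inter_subset_left)
  have hQV : Qn f g n u y θstar < Qn f g n u y θV := by
    rcases lt_or_eq_of_le (isMinOn_iff.1 hθstarmin θV hθVV.1) with h | h
    · exact h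
    · exfalso
      have hVA : θV ∈ A := ⟨hθVV.1, fun θ' hθ' => h ▸ isMinOn_iff.1 hθstarmin θ' hθ'⟩
      have h0 : Metric.infDist θV A = 0 := Metric.infDist_zero_of_mem hVA
      have := hθVV.2
      rw [Set.mem_setOf_eq, h0] at this
      linarith
  set η := Qn f g n u y θV - Qn f g n u y θstar with hηdef
  have hηpos : 0 < η := by simp only [hηdef]; linarith
  obtain ⟨Δ', hΔ'pos, hΔ'⟩ := Metric.uniformContinuousOn_iff.1
    (hΘcpt.uniformContinuousOn_of_continuous hQcont) η hηpos
  refine ⟨Δ'/2, by positivity, ?_⟩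
  intro δ hδ hδΔ 𝒯 h𝒯sub hnet θh hθh hmin
  obtain ⟨t, ht𝒯, htθ⟩ := hnet θstar hθstarΘ
  have hdist : dist t θstar < Δ' := by
    rw [dist_eq_norm]
    calc ‖t - θstar‖ ≤ δ := htθ
      _ ≤ Δ'/2 := hδΔ
      _ < Δ' := by linarith
  have h1 : dist (Qn f g n u y t) (Qn f g n u y θstar) < η :=
    hΔ' t (h𝒯sub ht𝒯) θstar hθstarΘ hdist
  have h2 : Qn f g n u y t < Qn f g n u y θstar + η := by
    rw [Real.dist_eq] at h1
    have := abs_sub_lt_iff.1 h1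
    linarith [this.1]
  have h3 : Qn f g n u y θh ≤ Qn f g n u y t := hmin t ht𝒯
  by_contra hcon
  have hmem : θh ∈ V := ⟨h𝒯sub hθh, not_lt.1 hcon⟩
  have h4 : Qn f g n u y θV ≤ Qn f g n u y θh := isMinOn_iff.1 hθVmin θh hmem
  simp only [hηdef] at h2
  linarith
end
end

section
/- Define E_VIA : ℝ → ℝ by E_VIA(θ) = 36(12−θ)² + (2+θ)² + 121(2−θ)² + 16(8−θ)² for θ ≤ 2; E_VIA(θ) = 36(12−θ)² + (2+θ)² + 16(8−θ)² for 2 < θ ≤ 8; and E_VIA(θ) = 36(12−θ)² + (2+θ)² + 36(8−θ)² for θ > 8. Then E_VIA attains a unique minimum over the interval [0,10] at θ* = 718/73; in particular, the minimizer satisfies θ* ≠ 10. -/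
open Set

noncomputable section

/-- The population slack objective `4·E(ε_i²)` of the VIA heuristic in the
counterexample of Proposition 1. -/
def EVIA : ℝ → ℝ := fun θ =>
  if θ ≤ 2 then
    36 * (12 - θ) ^ 2 + (2 + θ) ^ 2 + 121 * (2 - θ) ^ 2 + 16 * (8 - θ) ^ 2
  else if θ ≤ 8 then
    36 * (12 - θ) ^ 2 + (2 + θ) ^ 2 + 16 * (8 - θ) ^ 2
  else
    36 * (12 - θ) ^ 2 + (2 + θ) ^ 2 + 36 * (8 - θ) ^ 2

/-- In the counterexample showing that VIA is not estimation consistent, the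
objective `E_VIA` attains a unique minimum over `[0,10]` at `θ* = 718/73 ≠ 10`. -/
theorem statement17 :
    (718 / 73 : ℝ) ∈ Icc (0 : ℝ) 10 ∧
    (∀ θ ∈ Icc (0 : ℝ) 10, θ ≠ 718 / 73 → EVIA (718 / 73) < EVIA θ) ∧
    (718 / 73 : ℝ) ≠ 10 := by
  have hstar : EVIA (718 / 73) = 31392 / 73 := by
    unfold EVIA
    norm_num
  refine ⟨⟨by norm_num, by norm_num⟩, ?_, by norm_num⟩
  intro θ ⟨h0, h10⟩ hne
  rw [hstar]
  unfold EVIA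
  rcases le_or_gt θ 2 with h2 | h2
  · simp only [if_pos h2]
    nlinarith [sq_nonneg (θ - 2), sq_nonneg θ]
  · simp only [if_neg (not_le.mpr h2)]
    rcases le_or_gt θ 8 with h8 | h8
    · simp only [if_pos h8]
      nlinarith [sq_nonneg (θ - 8), sq_nonneg (θ - 2)]
    · simp only [if_neg (not_le.mpr h8)]
      have hs : θ - 718 / 73 ≠ 0 := sub_ne_zero.mpr hne
      have : (θ - 718 / 73) ^ 2 > 0 := pow_pos (abs_pos.mpr hs) 2 |>.trans_le (by rw [sq_abs])
      nlinarith [this]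
end
end
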